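/- arXiv:2007.14659 — 7 statements merged into one kernel-verified Lean document; each statement's English description precedes it below -/
import Mathlib

section
/- Let X be an integrable real-valued random variable with strictly increasing continuous cumulative distribution function F and density f. Fix α ∈ (0,1) and let θ_α be the α-quantile, i.e. F(θ_α) = α. Define L_α(θ) = θ + (1-α)^{-1} E[(X - θ)·1_{X > θ}]. Then L_α is differentiable with L_α'(θ) = (F(θ) - α)/(1 - α) for all θ ∈ ℝ; in particular L_α'(θ_α) = 0. -/
open MeasureTheory

private lemma key1 (a b x : ℝ) (hab : a ≤ b) :
    ∫ t in Set.Ioc a b, (if t < x then (1:ℝ) else 0) = max (x - a) 0 - max (x - b) 0 := by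
  have h1 : (fun t => if t < x then (1:ℝ) else 0) = (Set.Iio x).indicator (fun _ => 1) := by
    ext t; simp [Set.indicator_apply]
  rw [h1, integral_indicator measurableSet_Iio, Measure.restrict_restrict measurableSet_Iio,
    setIntegral_const, smul_eq_mul, mul_one, Measure.real]
  rcases le_or_gt x a with h | h
  · have : Set.Iio x ∩ Set.Ioc a b = ∅ := by
      ext t; simp only [Set.mem_inter_iff, Set.mem_Iio, Set.mem_Ioc, Set.mem_empty_iff_false,
        iff_false]; rintro ⟨h1, h2, h3⟩; linarith
    rw [this, measure_empty, ENNReal.toReal_zero,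
      max_eq_right (by linarith), max_eq_right (by linarith)]
    ring
  · rcases le_or_gt x b with h2 | h2
    · have : Set.Iio x ∩ Set.Ioc a b = Set.Ioo a x := by
        ext t; simp only [Set.mem_inter_iff, Set.mem_Iio, Set.mem_Ioc, Set.mem_Ioo]
        constructor
        · rintro ⟨h1, h3, h4⟩; exact ⟨h3, h1⟩
        · rintro ⟨h3, h4⟩; exact ⟨h4, h3, by linarith⟩
      rw [this, Real.volume_Ioo, ENNReal.toReal_ofReal (by linarith)]
      rw [max_eq_left (by linarith), max_eq_right (by linarith)]
      ring
    · have : Set.Iio x ∩ Set.Ioc a b = Set.Ioc a b := by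
        ext t; simp only [Set.mem_inter_iff, Set.mem_Iio, Set.mem_Ioc]
        constructor
        · rintro ⟨_, h3⟩; exact h3
        · rintro ⟨h3, h4⟩; exact ⟨by linarith, h3, h4⟩
      rw [this, Real.volume_Ioc, ENNReal.toReal_ofReal (by linarith)]
      rw [max_eq_left (by linarith), max_eq_left (by linarith)]
      ring

theorem stmt_4 {Ω : Type*} [MeasureSpace Ω] (μ : Measure Ω) [IsProbabilityMeasure μ]
    (X : Ω → ℝ) (hX : Integrable X μ)
    (F : ℝ → ℝ) (hF : ∀ t : ℝ, F t = (μ {ω | X ω ≤ t}).toReal)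
    (hFcont : Continuous F) (hFmono : StrictMono F)
    (f : ℝ → ℝ) (hf : ∀ t : ℝ, HasDerivAt F (f t) t)
    (α : ℝ) (hα : α ∈ Set.Ioo (0 : ℝ) 1)
    (θα : ℝ) (hθα : F θα = α)
    (L : ℝ → ℝ)
    (hL : ∀ θ : ℝ, L θ = θ + (1 - α)⁻¹ * ∫ ω, (if θ < X ω then X ω - θ else 0) ∂μ) :
    (∀ θ : ℝ, HasDerivAt L ((F θ - α) / (1 - α)) θ) ∧
      HasDerivAt L 0 θα := by
  set X' : Ω → ℝ := hX.1.mk X with hX'def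
  have hX'meas : Measurable X' := hX.1.stronglyMeasurable_mk.measurable
  have hXX' : X =ᵐ[μ] X' := hX.1.ae_eq_mk
  have hX'int : Integrable X' μ := hX.congr hXX'
  set G : ℝ → ℝ := fun θ => ∫ ω, max (X' ω - θ) 0 ∂μ with hGdef
  have hGint : ∀ θ : ℝ, Integrable (fun ω => max (X' ω - θ) 0) μ :=
    fun θ => (hX'int.sub (integrable_const θ)).pos_part
  -- F in terms of X'
  have hFt : ∀ t : ℝ, F t = (μ {ω | X' ω ≤ t}).toReal := by
    intro t
    rw [hF t]
    congr 1
    refine measure_congr (hXX'.mono fun ω h => ?_)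
    show (X ω ≤ t) = (X' ω ≤ t)
    rw [h]
  -- inner integral identity
  have h1F : ∀ t : ℝ, ∫ ω, (if t < X' ω then (1:ℝ) else 0) ∂μ = 1 - F t := by
    intro t
    have hset : MeasurableSet {ω | X' ω ≤ t} := hX'meas measurableSet_Iic
    have h1 : (fun ω => if t < X' ω then (1:ℝ) else 0)
        = ({ω | X' ω ≤ t}ᶜ).indicator (fun _ => 1) := by
      ext ω; simp [Set.indicator_apply, not_le]
    rw [h1, integral_indicator hset.compl, setIntegral_const, smul_eq_mul, mul_one, Measure.real,
      measure_compl hset (measure_ne_top μ _), measure_univ,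
      ENNReal.toReal_sub_of_le prob_le_one ENNReal.one_ne_top, ENNReal.toReal_one, hFt t]
  -- main Fubini identity
  have key2 : ∀ a b : ℝ, a ≤ b → G a - G b = ∫ t in Set.Ioc a b, (1 - F t) := by
    intro a b hab
    haveI : IsFiniteMeasure (volume.restrict (Set.Ioc a b)) :=
      ⟨by rw [Measure.restrict_apply_univ]; exact measure_Ioc_lt_top⟩
    have hs : MeasurableSet {p : Ω × ℝ | p.2 < X' p.1} :=
      measurableSet_lt measurable_snd (hX'meas.comp measurable_fst)
    have hint : Integrable (Function.uncurry fun ω t => if t < X' ω then (1:ℝ) else 0)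
        (μ.prod (volume.restrict (Set.Ioc a b))) := by
      have : (Function.uncurry fun ω t => if t < X' ω then (1:ℝ) else 0)
          = Set.indicator {p : Ω × ℝ | p.2 < X' p.1} (fun _ => 1) := by
        ext p; simp [Function.uncurry, Set.indicator_apply]
      rw [this]
      exact (integrable_const 1).indicator hs
    calc G a - G b = ∫ ω, (max (X' ω - a) 0 - max (X' ω - b) 0) ∂μ :=
          (integral_sub (hGint a) (hGint b)).symm
      _ = ∫ ω, (∫ t in Set.Ioc a b, (if t < X' ω then (1:ℝ) else 0)) ∂μ := by
          refine integral_congr_ae (Filter.Eventually.of_forall fun ω => ?_)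
          exact (key1 a b (X' ω) hab).symm
      _ = ∫ t in Set.Ioc a b, ∫ ω, (if t < X' ω then (1:ℝ) else 0) ∂μ :=
          integral_integral_swap hint
      _ = ∫ t in Set.Ioc a b, (1 - F t) :=
          integral_congr_ae (Filter.Eventually.of_forall fun t => h1F t)
  set H : ℝ → ℝ := fun θ => ∫ t in (0:ℝ)..θ, (1 - F t) with hHdef
  have hGH : ∀ θ : ℝ, G θ = G 0 - H θ := by
    intro θ
    rcases le_total 0 θ with h | h
    · have h1 := key2 0 θ h
      rw [hHdef]
      simp only
      rw [intervalIntegral.integral_of_le h]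
      linarith
    · have h1 := key2 θ 0 h
      rw [hHdef]
      simp only
      rw [intervalIntegral.integral_symm, intervalIntegral.integral_of_le h]
      linarith
  have hcont : Continuous fun t => 1 - F t := continuous_const.sub hFcont
  have hHder : ∀ θ : ℝ, HasDerivAt H (1 - F θ) θ := fun θ =>
    intervalIntegral.integral_hasDerivAt_right (hcont.intervalIntegrable 0 θ)
      hcont.aestronglyMeasurable.stronglyMeasurableAtFilter hcont.continuousAt
  have hLG : L = fun θ => θ + (1 - α)⁻¹ * (G 0 - H θ) := by
    funext θ
    rw [hL θ, ← hGH θ]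
    congr 2
    refine integral_congr_ae (hXX'.mono fun ω h => ?_)
    show (if θ < X ω then X ω - θ else 0) = max (X' ω - θ) 0
    rw [h]
    rcases lt_or_ge θ (X' ω) with h2 | h2
    · rw [if_pos h2, max_eq_left (by linarith)]
    · rw [if_neg (not_lt.2 h2), max_eq_right (by linarith)]
  have hne : (1:ℝ) - α ≠ 0 := by have := hα.2; intro h; linarith [sub_eq_zero.mp h]
  have key : ∀ θ : ℝ, HasDerivAt L ((F θ - α) / (1 - α)) θ := by
    intro θ
    rw [hLG]
    have hd : HasDerivAt (fun θ => θ + (1 - α)⁻¹ * (G 0 - H θ))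
        (1 + (1 - α)⁻¹ * (-(1 - F θ))) θ :=
      (hasDerivAt_id θ).add (((hHder θ).const_sub (G 0)).const_mul ((1 - α)⁻¹))
    have heq : (F θ - α) / (1 - α) = 1 + (1 - α)⁻¹ * (-(1 - F θ)) := by
      field_simp
      ring
    rw [heq]
    exact hd
  exact ⟨key, by have := key θα; rwa [hθα, sub_self, zero_div] at this⟩
end

section
/- With the setup above and assuming f is bounded, L_α is convex, L_α(θ_α) = ϑ_α where ϑ_α = E[X | X ≥ θ_α], and for all θ ∈ ℝ: 0 ≤ L_α(θ) - L_α(θ_α) ≤ (‖f‖_∞ / (2(1-α))) (θ - θ_α)². -/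
open MeasureTheory

lemma aux_inner_t (y θ₁ θ₂ : ℝ) (h : θ₁ ≤ θ₂) :
    (∫ t in θ₁..θ₂, (if t < y then (1:ℝ) else 0)) = max (y - θ₁) 0 - max (y - θ₂) 0 := by
  have h1 : (fun t => if t < y then (1:ℝ) else 0) = (Set.Iio y).indicator (fun _ => (1:ℝ)) := by
    ext t; simp [Set.indicator_apply]
  rw [intervalIntegral.integral_of_le h, h1,
    MeasureTheory.setIntegral_indicator measurableSet_Iio]
  have hsub1 : Set.Ioo θ₁ (min θ₂ y) ⊆ Set.Ioc θ₁ θ₂ ∩ Set.Iio y := by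
    rintro t ⟨ht1, ht2⟩
    exact ⟨⟨ht1, le_of_lt (lt_of_lt_of_le ht2 (min_le_left _ _))⟩,
      lt_of_lt_of_le ht2 (min_le_right _ _)⟩
  have hsub2 : Set.Ioc θ₁ θ₂ ∩ Set.Iio y ⊆ Set.Ioc θ₁ (min θ₂ y) := by
    rintro t ⟨⟨ht1, ht2⟩, ht3⟩
    exact ⟨ht1, le_min ht2 ht3.le⟩
  have hvol : volume (Set.Ioc θ₁ θ₂ ∩ Set.Iio y) = ENNReal.ofReal (min θ₂ y - θ₁) := by
    refine le_antisymm ?_ ?_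
    · calc volume (Set.Ioc θ₁ θ₂ ∩ Set.Iio y) ≤ volume (Set.Ioc θ₁ (min θ₂ y)) :=
        measure_mono hsub2
      _ = ENNReal.ofReal (min θ₂ y - θ₁) := Real.volume_Ioc
    · calc ENNReal.ofReal (min θ₂ y - θ₁) = volume (Set.Ioo θ₁ (min θ₂ y)) :=
        Real.volume_Ioo.symm
      _ ≤ _ := measure_mono hsub1
  rw [MeasureTheory.setIntegral_const, measureReal_def, hvol, smul_eq_mul, mul_one,
    ENNReal.toReal_ofReal']
  simp only [min_def, max_def]
  split_ifs <;> linarith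

lemma aux_key {Ω : Type*} [MeasureSpace Ω] (μ : Measure Ω) [IsProbabilityMeasure μ]
    (Y : Ω → ℝ) (hY : Measurable Y) (hYi : Integrable Y μ) {θ₁ θ₂ : ℝ} (h : θ₁ ≤ θ₂) :
    (∫ ω, max (Y ω - θ₁) 0 ∂μ) - (∫ ω, max (Y ω - θ₂) 0 ∂μ)
      = ∫ t in θ₁..θ₂, (μ {ω | t < Y ω}).toReal := by
  have hmax : ∀ θ : ℝ, Integrable (fun ω => max (Y ω - θ) 0) μ :=
    fun θ => (hYi.sub (integrable_const θ)).pos_part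
  haveI : IsFiniteMeasure (volume.restrict (Set.Ioc θ₁ θ₂)) := by
    constructor
    rw [Measure.restrict_apply MeasurableSet.univ, Set.univ_inter, Real.volume_Ioc]
    exact ENNReal.ofReal_lt_top
  have hSmeas : MeasurableSet {p : Ω × ℝ | p.2 < Y p.1} :=
    measurableSet_lt measurable_snd (hY.comp measurable_fst)
  have hint : Integrable (Function.uncurry fun ω t => if t < Y ω then (1:ℝ) else 0)
      (μ.prod (volume.restrict (Set.Ioc θ₁ θ₂))) := by
    have heq : (Function.uncurry fun ω t => if t < Y ω then (1:ℝ) else 0)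
        = Set.indicator {p : Ω × ℝ | p.2 < Y p.1} (fun _ => 1) := by
      ext p; simp [Function.uncurry, Set.indicator_apply]
    rw [heq]
    exact (integrable_const 1).indicator hSmeas
  have swap := MeasureTheory.integral_integral_swap hint
  have lhs : (∫ ω, (∫ t in Set.Ioc θ₁ θ₂, (if t < Y ω then (1:ℝ) else 0)) ∂μ)
      = (∫ ω, max (Y ω - θ₁) 0 ∂μ) - (∫ ω, max (Y ω - θ₂) 0 ∂μ) := by
    rw [← integral_sub (hmax θ₁) (hmax θ₂)]
    refine integral_congr_ae (Filter.Eventually.of_forall fun ω => ?_)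
    have h2 := aux_inner_t (Y ω) θ₁ θ₂ h
    rw [intervalIntegral.integral_of_le h] at h2
    exact h2
  have rhs : (∫ t in Set.Ioc θ₁ θ₂, (∫ ω, (if t < Y ω then (1:ℝ) else 0) ∂μ))
      = ∫ t in θ₁..θ₂, (μ {ω | t < Y ω}).toReal := by
    rw [intervalIntegral.integral_of_le h]
    refine integral_congr_ae (Filter.Eventually.of_forall fun t => ?_)
    have heq : (fun ω => if t < Y ω then (1:ℝ) else 0)
        = Set.indicator {ω | t < Y ω} (fun _ => 1) := by
      ext ω; simp [Set.indicator_apply]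
    show (∫ ω, (if t < Y ω then (1:ℝ) else 0) ∂μ) = (μ {ω | t < Y ω}).toReal
    have hms : MeasurableSet {ω | t < Y ω} := hY measurableSet_Ioi
    rw [heq, integral_indicator_const (1:ℝ) hms, smul_eq_mul, mul_one, measureReal_def]
  exact lhs.symm.trans (swap.trans rhs)

theorem stmt_5 {Ω : Type*} [MeasureSpace Ω] (μ : Measure Ω) [IsProbabilityMeasure μ]
    (X : Ω → ℝ) (hX : Integrable X μ)
    (F : ℝ → ℝ) (hF : ∀ t : ℝ, F t = (μ {ω | X ω ≤ t}).toReal)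
    (f : ℝ → ℝ) (hf : ∀ t : ℝ, HasDerivAt F (f t) t) (hfpos : ∀ t : ℝ, 0 ≤ f t)
    (Mf : ℝ) (hMf : ∀ t : ℝ, f t ≤ Mf)
    (α : ℝ) (hα : α ∈ Set.Ioo (0 : ℝ) 1)
    (θα : ℝ) (hθα : F θα = α)
    (ϑα : ℝ) (hϑα : ϑα = (1 - α)⁻¹ * ∫ ω, (if θα ≤ X ω then X ω else 0) ∂μ)
    (L : ℝ → ℝ)
    (hL : ∀ θ : ℝ, L θ = θ + (1 - α)⁻¹ * ∫ ω, (if θ < X ω then X ω - θ else 0) ∂μ) :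
    ConvexOn ℝ Set.univ L ∧ L θα = ϑα ∧
      ∀ θ : ℝ, 0 ≤ L θ - L θα ∧ L θ - L θα ≤ Mf / (2 * (1 - α)) * (θ - θα) ^ 2 := by
  obtain ⟨Y, hYsm, hXY⟩ : ∃ Y : Ω → ℝ, StronglyMeasurable Y ∧ X =ᵐ[μ] Y :=
    ⟨hX.1.mk X, hX.1.stronglyMeasurable_mk, hX.1.ae_eq_mk⟩
  have hY : Measurable Y := hYsm.measurable
  have hYi : Integrable Y μ := hX.congr hXY
  have h1α : (0:ℝ) < 1 - α := by linarith [hα.2]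
  have hmax : ∀ θ : ℝ, Integrable (fun ω => max (Y ω - θ) 0) μ :=
    fun θ => (hYi.sub (integrable_const θ)).pos_part
  -- F in terms of Y
  have hFY : ∀ t : ℝ, (μ {ω | Y ω ≤ t}).toReal = F t := by
    intro t
    rw [hF t]
    congr 1
    apply measure_congr
    filter_upwards [hXY] with ω hω
    change (Y ω ≤ t) = (X ω ≤ t)
    rw [hω]
  have hP : ∀ t : ℝ, (μ {ω | t < Y ω}).toReal = 1 - F t := by
    intro t
    have hs : MeasurableSet {ω | Y ω ≤ t} := hY measurableSet_Iic
    have hc : {ω | t < Y ω} = {ω | Y ω ≤ t}ᶜ := by ext ω; simp [not_le]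
    rw [hc, measure_compl hs (measure_ne_top μ _), measure_univ,
      ENNReal.toReal_sub_of_le prob_le_one ENNReal.one_ne_top, ENNReal.toReal_one, hFY]
  -- rewrite L in terms of G
  have hG : ∀ θ : ℝ, (∫ ω, (if θ < X ω then X ω - θ else 0) ∂μ)
      = ∫ ω, max (Y ω - θ) 0 ∂μ := by
    intro θ
    refine integral_congr_ae ?_
    filter_upwards [hXY] with ω hω
    rw [hω]
    rcases le_or_gt (Y ω) θ with h | h
    · simp [not_lt.mpr h, max_eq_right (by linarith : Y ω - θ ≤ 0)]
    · simp [h, max_eq_left (by linarith : (0:ℝ) ≤ Y ω - θ)]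
  have hL' : ∀ θ : ℝ, L θ = θ + (1 - α)⁻¹ * ∫ ω, max (Y ω - θ) 0 ∂μ := by
    intro θ; rw [hL θ, hG θ]
  -- continuity / monotonicity / lipschitz of F
  have hFc : Continuous F := continuous_iff_continuousAt.mpr fun t => (hf t).continuousAt
  have hFmono : Monotone F := by
    intro s t hst
    rw [← hFY s, ← hFY t]
    exact ENNReal.toReal_mono (measure_ne_top μ _)
      (measure_mono fun ω (h : Y ω ≤ s) => le_trans h hst)
  have hMf0 : 0 ≤ Mf := le_trans (hfpos 0) (hMf 0)
  have hFlip : ∀ s t : ℝ, |F t - F s| ≤ Mf * |t - s| := by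
    intro s t
    have := Convex.norm_image_sub_le_of_norm_hasDerivWithin_le
      (f := F) (f' := f) (s := Set.univ) (C := Mf)
      (fun x _ => (hf x).hasDerivWithinAt)
      (fun x _ => by rw [Real.norm_eq_abs, abs_of_nonneg (hfpos x)]; exact hMf x)
      convex_univ (Set.mem_univ s) (Set.mem_univ t)
    simpa [Real.norm_eq_abs] using this
  -- the key difference formula
  have hkey : ∀ θ₁ θ₂ : ℝ, θ₁ ≤ θ₂ →
      L θ₂ - L θ₁ = (1 - α)⁻¹ * ∫ t in θ₁..θ₂, (F t - α) := by
    intro θ₁ θ₂ h12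
    have hk := aux_key μ Y hY hYi h12
    have hPe : ∫ t in θ₁..θ₂, (μ {ω | t < Y ω}).toReal
        = ∫ t in θ₁..θ₂, (1 - F t) := by
      refine intervalIntegral.integral_congr fun t _ => hP t
    rw [hPe] at hk
    have hiF : IntervalIntegrable F volume θ₁ θ₂ := hFc.intervalIntegrable _ _
    have h1F : ∫ t in θ₁..θ₂, ((1:ℝ) - F t)
        = (θ₂ - θ₁) - ∫ t in θ₁..θ₂, F t := by
      rw [intervalIntegral.integral_sub intervalIntegrable_const hiF,
        intervalIntegral.integral_const, smul_eq_mul, mul_one]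
    have hFα : ∫ t in θ₁..θ₂, (F t - α)
        = (∫ t in θ₁..θ₂, F t) - α * (θ₂ - θ₁) := by
      rw [intervalIntegral.integral_sub hiF intervalIntegrable_const,
        intervalIntegral.integral_const, smul_eq_mul, mul_comm]
    rw [hL' θ₁, hL' θ₂]
    rw [h1F] at hk
    rw [hFα]
    have hne : (1 - α) ≠ 0 := ne_of_gt h1α
    field_simp
    nlinarith [hk]
  -- convexity
  have hGconv : ConvexOn ℝ Set.univ (fun θ : ℝ => ∫ ω, max (Y ω - θ) 0 ∂μ) := by
    refine ⟨convex_univ, fun a _ b _ s t hs ht hst => ?_⟩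
    simp only [smul_eq_mul]
    have hpt : ∀ ω, max (Y ω - (s * a + t * b)) 0
        ≤ s * max (Y ω - a) 0 + t * max (Y ω - b) 0 := by
      intro ω
      have he : Y ω - (s * a + t * b) = s * (Y ω - a) + t * (Y ω - b) := by
        linear_combination (-(Y ω)) * hst
      have h0 : 0 ≤ s * max (Y ω - a) 0 + t * max (Y ω - b) 0 :=
        add_nonneg (mul_nonneg hs (le_max_right _ _)) (mul_nonneg ht (le_max_right _ _))
      refine max_le ?_ h0
      rw [he]
      exact add_le_add (mul_le_mul_of_nonneg_left (le_max_left _ _) hs)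
        (mul_le_mul_of_nonneg_left (le_max_left _ _) ht)
    calc (∫ ω, max (Y ω - (s * a + t * b)) 0 ∂μ)
        ≤ ∫ ω, (s * max (Y ω - a) 0 + t * max (Y ω - b) 0) ∂μ :=
          integral_mono (hmax _) (((hmax a).const_mul s).add ((hmax b).const_mul t)) hpt
      _ = s * (∫ ω, max (Y ω - a) 0 ∂μ) + t * (∫ ω, max (Y ω - b) 0 ∂μ) := by
          rw [integral_add ((hmax a).const_mul s) ((hmax b).const_mul t),
            integral_const_mul, integral_const_mul]
  have hLconv : ConvexOn ℝ Set.univ L := by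
    have hLfun : L = fun θ => θ + (1 - α)⁻¹ * ∫ ω, max (Y ω - θ) 0 ∂μ := funext hL'
    rw [hLfun]
    have h2 := (convexOn_id (convex_univ (𝕜 := ℝ) (E := ℝ))).add
      (hGconv.smul (inv_nonneg.mpr h1α.le))
    exact h2
  -- the null set {Y = θα}
  have hnull : μ {ω | Y ω = θα} = 0 := by
    have hbound : ∀ n : ℕ, (μ {ω | Y ω = θα}).toReal ≤ F θα - F (θα - 1/(n+1)) := by
      intro n
      have hn : (0:ℝ) < 1/(n+1) := by positivity
      have hd : Disjoint {ω | Y ω ≤ θα - 1/(n+1)} {ω | Y ω = θα} := by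
        rw [Set.disjoint_left]
        rintro ω (h1 : Y ω ≤ _) (h2 : Y ω = θα)
        rw [h2] at h1; linarith
      have hm : MeasurableSet {ω | Y ω = θα} := hY (measurableSet_singleton θα)
      have hsub : {ω | Y ω ≤ θα - 1/(n+1)} ∪ {ω | Y ω = θα} ⊆ {ω | Y ω ≤ θα} := by
        rintro ω (h | h)
        · show Y ω ≤ θα
          have h' : Y ω ≤ θα - 1/(n+1) := h
          linarith
        · show Y ω ≤ θα
          exact le_of_eq h
      have hmle := measure_mono (μ := μ) hsub
      rw [measure_union hd hm] at hmle
      have h1 := measure_ne_top μ {ω | Y ω ≤ θα - 1/(n+1)}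
      have h2 := measure_ne_top μ {ω | Y ω = θα}
      have h3 := ENNReal.toReal_mono (measure_ne_top μ _) hmle
      rw [ENNReal.toReal_add h1 h2, hFY, hFY] at h3
      linarith [h3]
    have htend : Filter.Tendsto (fun n : ℕ => F θα - F (θα - 1/(n+1)))
        Filter.atTop (nhds 0) := by
      have h1 : Filter.Tendsto (fun n : ℕ => θα - 1/(n+1)) Filter.atTop (nhds θα) := by
        have h0 := tendsto_one_div_add_atTop_nhds_zero_nat (𝕜 := ℝ)
        simpa using (tendsto_const_nhds (x := θα)
          (f := Filter.atTop (α := ℕ))).sub h0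
      have h2 := ((hFc.continuousAt (x := θα)).tendsto).comp h1
      have h3 := (tendsto_const_nhds (x := F θα) (f := Filter.atTop (α := ℕ))).sub h2
      simpa using h3
    have hle : (μ {ω | Y ω = θα}).toReal ≤ 0 :=
      ge_of_tendsto htend (Filter.Eventually.of_forall hbound)
    have h0 : (μ {ω | Y ω = θα}).toReal = 0 := le_antisymm hle ENNReal.toReal_nonneg
    exact ((ENNReal.toReal_eq_zero_iff _).mp h0).resolve_right (measure_ne_top μ _)
  have haeY : ∀ᵐ ω ∂μ, Y ω ≠ θα := by
    rw [ae_iff]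
    simpa using hnull
  -- L θα = ϑα
  have hind : Integrable (fun ω => (if θα < Y ω then (1:ℝ) else 0)) μ := by
    have heq : (fun ω => if θα < Y ω then (1:ℝ) else 0)
        = Set.indicator {ω | θα < Y ω} (fun _ => 1) := by
      ext ω; simp [Set.indicator_apply]
    rw [heq]
    exact (integrable_const 1).indicator (hY measurableSet_Ioi)
  have hI : (∫ ω, (if θα ≤ X ω then X ω else 0) ∂μ)
      = (∫ ω, max (Y ω - θα) 0 ∂μ) + θα * (1 - α) := by
    have h1 : (∫ ω, (if θα ≤ X ω then X ω else 0) ∂μ)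
        = ∫ ω, (max (Y ω - θα) 0 + θα * (if θα < Y ω then (1:ℝ) else 0)) ∂μ := by
      refine integral_congr_ae ?_
      filter_upwards [hXY, haeY] with ω hω hne
      rw [hω]
      rcases lt_or_ge θα (Y ω) with h | h
      · simp only [if_pos h, if_pos (le_of_lt h),
          max_eq_left (by linarith : (0:ℝ) ≤ Y ω - θα), mul_one]
        ring
      · have hlt : Y ω < θα := lt_of_le_of_ne h hne
        simp [not_le.mpr hlt, not_lt.mpr h,
          max_eq_right (by linarith : Y ω - θα ≤ 0)]
    rw [h1, integral_add (hmax θα) (hind.const_mul θα), integral_const_mul]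
    congr 1
    have heq : (fun ω => if θα < Y ω then (1:ℝ) else 0)
        = Set.indicator {ω | θα < Y ω} (fun _ => 1) := by
      ext ω; simp [Set.indicator_apply]
    have hms : MeasurableSet {ω | θα < Y ω} := hY measurableSet_Ioi
    rw [heq, integral_indicator_const (1:ℝ) hms, smul_eq_mul, mul_one, measureReal_def, hP, hθα]
  have hne : (1:ℝ) - α ≠ 0 := ne_of_gt h1α
  have hLθα : L θα = ϑα := by
    rw [hL' θα, hϑα, hI]
    field_simp
    ring
  refine ⟨hLconv, hLθα, fun θ => ?_⟩
  rcases le_total θα θ with hcase | hcase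
  · have hd := hkey θα θ hcase
    constructor
    · rw [hd]
      refine mul_nonneg (inv_nonneg.mpr h1α.le) ?_
      refine intervalIntegral.integral_nonneg hcase fun u hu => ?_
      have hm := hFmono hu.1
      rw [hθα] at hm; linarith
    · rw [hd]
      have hmono : ∫ t in θα..θ, (F t - α) ≤ ∫ t in θα..θ, Mf * (t - θα) := by
        refine intervalIntegral.integral_mono_on hcase
          ((hFc.sub continuous_const).intervalIntegrable _ _)
          ((continuous_const.mul (continuous_id.sub continuous_const)).intervalIntegrable _ _)
          fun u hu => ?_
        have h1 : F u - F θα ≤ |F u - F θα| := le_abs_self _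
        have h2 := hFlip θα u
        rw [abs_of_nonneg (sub_nonneg.mpr hu.1)] at h2
        have h3 : F u - α = F u - F θα := by rw [hθα]
        linarith
      have hval : ∫ t in θα..θ, Mf * (t - θα) = Mf * ((θ - θα)^2 / 2) := by
        rw [intervalIntegral.integral_const_mul]
        have hid : ∫ t in θα..θ, (t - θα) = (θ - θα)^2 / 2 := by
          have hc := intervalIntegral.integral_comp_sub_right
            (a := θα) (b := θ) (fun x => x) θα
          rw [hc, integral_id, sub_self]
          ring
        rw [hid]
      have hfin := mul_le_mul_of_nonneg_left hmono (inv_nonneg.mpr h1α.le)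
      rw [hval] at hfin
      calc (1 - α)⁻¹ * ∫ t in θα..θ, (F t - α)
          ≤ (1 - α)⁻¹ * (Mf * ((θ - θα)^2 / 2)) := hfin
        _ = Mf / (2 * (1 - α)) * (θ - θα) ^ 2 := by
            rw [div_mul_eq_mul_div, eq_div_iff
              (by positivity : (2:ℝ) * (1 - α) ≠ 0)]
            have hcancel : (1 - α) * (1 - α)⁻¹ = 1 := mul_inv_cancel₀ (ne_of_gt h1α)
            linear_combination (Mf * (θ - θα) ^ 2) * hcancel
  · have hd := hkey θ θα hcase
    have hneg : ∫ t in θ..θα, (α - F t) = - ∫ t in θ..θα, (F t - α) := by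
      rw [← intervalIntegral.integral_neg]
      exact intervalIntegral.integral_congr fun t _ => by ring
    have hd' : L θ - L θα = (1 - α)⁻¹ * ∫ t in θ..θα, (α - F t) := by
      rw [hneg, mul_neg]; linarith
    constructor
    · rw [hd']
      refine mul_nonneg (inv_nonneg.mpr h1α.le) ?_
      refine intervalIntegral.integral_nonneg hcase fun u hu => ?_
      have hm := hFmono hu.2
      rw [hθα] at hm; linarith
    · rw [hd']
      have hmono : ∫ t in θ..θα, (α - F t) ≤ ∫ t in θ..θα, Mf * (θα - t) := by
        refine intervalIntegral.integral_mono_on hcase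
          ((continuous_const.sub hFc).intervalIntegrable _ _)
          ((continuous_const.mul (continuous_const.sub continuous_id)).intervalIntegrable _ _)
          fun u hu => ?_
        have h1 : F θα - F u ≤ |F θα - F u| := le_abs_self _
        have h1' : |F θα - F u| = |F u - F θα| := abs_sub_comm _ _
        have h2 := hFlip θα u
        rw [abs_of_nonpos (sub_nonpos.mpr hu.2)] at h2
        have h3 : α - F u = F θα - F u := by rw [hθα]
        linarith
      have hval : ∫ t in θ..θα, Mf * (θα - t) = Mf * ((θα - θ)^2 / 2) := by
        rw [intervalIntegral.integral_const_mul]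
        have hid : ∫ t in θ..θα, (θα - t) = (θα - θ)^2 / 2 := by
          have h1 : ∫ t in θ..θα, (θα - t) = - ∫ t in θ..θα, (t - θα) := by
            rw [← intervalIntegral.integral_neg]
            exact intervalIntegral.integral_congr fun t _ => by ring
          have hc := intervalIntegral.integral_comp_sub_right
            (a := θ) (b := θα) (fun x => x) θα
          rw [h1, hc, integral_id, sub_self]
          ring
        rw [hid]
      have hfin := mul_le_mul_of_nonneg_left hmono (inv_nonneg.mpr h1α.le)
      rw [hval] at hfin
      calc (1 - α)⁻¹ * ∫ t in θ..θα, (α - F t)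
          ≤ (1 - α)⁻¹ * (Mf * ((θα - θ)^2 / 2)) := hfin
        _ = Mf / (2 * (1 - α)) * (θ - θα) ^ 2 := by
            rw [div_mul_eq_mul_div, eq_div_iff
              (by positivity : (2:ℝ) * (1 - α) ≠ 0)]
            have hcancel : (1 - α) * (1 - α)⁻¹ = 1 := mul_inv_cancel₀ (ne_of_gt h1α)
            linear_combination (Mf * (θ - θα) ^ 2) * hcancel
end

section
/- Define H_α(θ) = (1-α)^{-1} E[X·1_{X > θ}]. Assume f is differentiable and Φ(θ) = f(θ) + θ f'(θ) is bounded with ‖Φ‖_∞ < ∞. Then H_α(θ_α) = ϑ_α and for all θ ∈ ℝ: |H_α(θ) - H_α(θ_α) + (θ_α f(θ_α)/(1-α))(θ - θ_α)| ≤ (‖Φ‖_∞ / (2(1-α))) (θ - θ_α)². -/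
open MeasureTheory Filter


lemma key_ptwise (x θ θ' : ℝ) :
    |(if θ' < x then x else 0) - (if θ < x then x else 0)
      + θ * ((if x ≤ θ' then (1:ℝ) else 0) - (if x ≤ θ then 1 else 0))|
    ≤ |θ' - θ| * |(if x ≤ θ' then (1:ℝ) else 0) - (if x ≤ θ then 1 else 0)| := by
  rcases le_or_gt x θ with h1 | h1 <;> rcases le_or_gt x θ' with h2 | h2
  · simp [not_lt.2 h1, not_lt.2 h2, h1, h2]
  · rw [if_pos h2, if_neg (not_lt.2 h1), if_neg (not_le.2 h2), if_pos h1]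
    have e : x - 0 + θ * ((0:ℝ) - 1) = -(θ - x) := by ring
    rw [e, abs_neg, abs_of_nonneg (by linarith : (0:ℝ) ≤ θ - x)]
    have e2 : |θ' - θ| = θ - θ' := by rw [abs_of_nonpos (by linarith)]; ring
    have e3 : |(0:ℝ) - 1| = 1 := by norm_num
    rw [e2, e3, mul_one]; linarith
  · rw [if_neg (not_lt.2 h2), if_pos h1, if_pos h2, if_neg (not_le.2 h1)]
    have e : (0:ℝ) - x + θ * (1 - 0) = -(x - θ) := by ring
    rw [e, abs_neg, abs_of_nonneg (by linarith : (0:ℝ) ≤ x - θ)]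
    have e2 : |θ' - θ| = θ' - θ := abs_of_nonneg (by linarith)
    have e3 : |(1:ℝ) - 0| = 1 := by norm_num
    rw [e2, e3, mul_one]; linarith
  · simp [not_le.2 h1, not_le.2 h2, h1, h2]

lemma auxTaylor (ψ φ : ℝ → ℝ) (hψ : ∀ t, HasDerivAt ψ (φ t) t) (hφc : Continuous φ)
    (a L : ℝ) (hL : 0 ≤ L) (hb : ∀ t, |φ t| ≤ L * abs (t - a)) (b : ℝ) :
    |ψ b - ψ a| ≤ L / 2 * (b - a) ^ 2 := by
  have hint : ψ b - ψ a = ∫ t in a..b, φ t :=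
    (intervalIntegral.integral_eq_sub_of_hasDerivAt (fun t _ => hψ t)
      (hφc.intervalIntegrable a b)).symm
  have hbd : ‖∫ t in a..b, φ t‖ ≤ |∫ t in a..b, L * abs (t - a)| := by
    apply intervalIntegral.norm_integral_le_abs_of_norm_le
    · exact Filter.Eventually.of_forall fun t => by simpa using hb t
    · exact ((continuous_const.mul ((continuous_id.sub continuous_const).abs)).intervalIntegrable a b)
  have hcomp : |∫ t in a..b, L * abs (t - a)| = L / 2 * (b - a) ^ 2 := by
    rcases le_total a b with hab | hab
    · have e1 : (∫ t in a..b, L * abs (t - a)) = ∫ t in a..b, L * (t - a) := by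
        apply intervalIntegral.integral_congr
        intro t ht
        rw [Set.uIcc_of_le hab] at ht
        obtain ⟨ht1, ht2⟩ := Set.mem_Icc.mp ht
        show L * abs (t - a) = L * (t - a)
        rw [abs_of_nonneg (by linarith)]
      have e2 : (∫ t in a..b, L * (t - a)) = L / 2 * (b - a) ^ 2 := by
        have hid : IntervalIntegrable (fun x : ℝ => x) MeasureTheory.volume a b :=
          continuous_id.intervalIntegrable a b
        rw [intervalIntegral.integral_const_mul,
          intervalIntegral.integral_sub hid (intervalIntegrable_const), integral_id,
          intervalIntegral.integral_const]
        simp; ring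
      rw [e1, e2, abs_of_nonneg (by positivity)]
    · have h1 : (∫ t in a..b, L * abs (t - a)) = -∫ t in b..a, L * abs (t - a) := by
        rw [intervalIntegral.integral_symm]
      have e1 : (∫ t in b..a, L * abs (t - a)) = ∫ t in b..a, L * (a - t) := by
        apply intervalIntegral.integral_congr
        intro t ht
        rw [Set.uIcc_of_le hab] at ht
        obtain ⟨ht1, ht2⟩ := Set.mem_Icc.mp ht
        show L * abs (t - a) = L * (a - t)
        rw [abs_of_nonpos (by linarith), neg_sub]
      have e2 : (∫ t in b..a, L * (a - t)) = L / 2 * (b - a) ^ 2 := by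
        have hid : IntervalIntegrable (fun x : ℝ => x) MeasureTheory.volume b a :=
          continuous_id.intervalIntegrable b a
        rw [intervalIntegral.integral_const_mul,
          intervalIntegral.integral_sub (intervalIntegrable_const) hid, integral_id,
          intervalIntegral.integral_const]
        simp; ring
      rw [h1, e1, e2, abs_neg, abs_of_nonneg (by positivity)]
  rw [hint, ← Real.norm_eq_abs]
  exact hbd.trans_eq hcomp

lemma auxDeriv {Ω : Type*} [MeasurableSpace Ω] (μ : Measure Ω) [IsProbabilityMeasure μ]
    (Y : Ω → ℝ) (hYm : Measurable Y) (hYint : Integrable Y μ)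
    (F : ℝ → ℝ) (hFY : ∀ t, F t = (μ {ω | Y ω ≤ t}).toReal)
    (θ fθ : ℝ) (hfθ : HasDerivAt F fθ θ) :
    HasDerivAt (fun t => ∫ ω, (if t < Y ω then Y ω else 0) ∂μ) (-θ * fθ) θ := by
  set G : ℝ → ℝ := fun t => ∫ ω, (if t < Y ω then Y ω else 0) ∂μ with hG
  have intU : ∀ t : ℝ, Integrable (fun ω => if t < Y ω then Y ω else 0) μ := by
    intro t
    have : (fun ω => if t < Y ω then Y ω else 0) = {ω | t < Y ω}.indicator Y := by
      funext ω; simp [Set.indicator_apply, Set.mem_setOf_eq]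
    rw [this]
    exact hYint.indicator (hYm measurableSet_Ioi)
  have intI : ∀ t : ℝ, Integrable (fun ω => if Y ω ≤ t then (1:ℝ) else 0) μ := by
    intro t
    have : (fun ω => if Y ω ≤ t then (1:ℝ) else 0) = {ω | Y ω ≤ t}.indicator (fun _ => 1) := by
      funext ω; simp [Set.indicator_apply, Set.mem_setOf_eq]
    rw [this]
    exact (integrable_const 1).indicator (hYm measurableSet_Iic)
  have FI : ∀ t : ℝ, (∫ ω, (if Y ω ≤ t then (1:ℝ) else 0) ∂μ) = F t := by
    intro t
    have : (fun ω => if Y ω ≤ t then (1:ℝ) else 0) = {ω | Y ω ≤ t}.indicator (fun _ => 1) := by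
      funext ω; simp [Set.indicator_apply, Set.mem_setOf_eq]
    rw [this, hFY t]
    have hset : MeasurableSet {ω | Y ω ≤ t} := hYm measurableSet_Iic
    rw [integral_indicator_const (μ := μ) (1:ℝ) hset]
    simp [measureReal_def]
  have Fmono : Monotone F := by
    intro s t hst
    rw [hFY s, hFY t]
    exact ENNReal.toReal_mono (measure_ne_top μ _)
      (measure_mono fun ω (h : Y ω ≤ s) => le_trans h hst)
  have est : ∀ θ' : ℝ, |G θ' - G θ + θ * (F θ' - F θ)| ≤ |θ' - θ| * |F θ' - F θ| := by
    intro θ'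
    have i1 : Integrable (fun ω => (if θ' < Y ω then Y ω else 0)
        - (if θ < Y ω then Y ω else 0)) μ := (intU θ').sub (intU θ)
    have i2 : Integrable (fun ω => θ * ((if Y ω ≤ θ' then (1:ℝ) else 0)
        - (if Y ω ≤ θ then 1 else 0))) μ := ((intI θ').sub (intI θ)).const_mul θ
    have hds : G θ' - G θ + θ * (F θ' - F θ)
        = ∫ ω, ((if θ' < Y ω then Y ω else 0) - (if θ < Y ω then Y ω else 0)
            + θ * ((if Y ω ≤ θ' then (1:ℝ) else 0) - (if Y ω ≤ θ then 1 else 0))) ∂μ := by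
      rw [integral_add i1 i2, integral_sub (intU θ') (intU θ), integral_const_mul,
        integral_sub (intI θ') (intI θ), FI θ', FI θ]
    have habs : |∫ ω, ((if θ' < Y ω then Y ω else 0) - (if θ < Y ω then Y ω else 0)
            + θ * ((if Y ω ≤ θ' then (1:ℝ) else 0) - (if Y ω ≤ θ then 1 else 0))) ∂μ|
        ≤ ∫ ω, |θ' - θ| * |(if Y ω ≤ θ' then (1:ℝ) else 0) - (if Y ω ≤ θ then 1 else 0)| ∂μ := by
      have step1 := norm_integral_le_integral_norm (μ := μ)
        (f := fun ω => ((if θ' < Y ω then Y ω else 0) - (if θ < Y ω then Y ω else 0)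
            + θ * ((if Y ω ≤ θ' then (1:ℝ) else 0) - (if Y ω ≤ θ then 1 else 0))))
      simp only [Real.norm_eq_abs] at step1
      refine step1.trans ?_
      apply integral_mono
      · exact (i1.add i2).abs
      · exact (((intI θ').sub (intI θ)).abs.const_mul _)
      · intro ω; exact key_ptwise (Y ω) θ θ'
    have hind : (∫ ω, |(if Y ω ≤ θ' then (1:ℝ) else 0) - (if Y ω ≤ θ then 1 else 0)| ∂μ)
        = |F θ' - F θ| := by
      rcases le_total θ θ' with h | h
      · have e : (fun ω => |(if Y ω ≤ θ' then (1:ℝ) else 0) - (if Y ω ≤ θ then 1 else 0)|)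
            = fun ω => (if Y ω ≤ θ' then (1:ℝ) else 0) - (if Y ω ≤ θ then 1 else 0) := by
          funext ω
          rcases le_or_gt (Y ω) θ with h1 | h1
          · simp [h1, le_trans h1 h]
          · rcases le_or_gt (Y ω) θ' with h2 | h2
            · simp [not_le.2 h1, h2]
            · simp [not_le.2 h1, not_le.2 h2]
        rw [e, integral_sub (intI θ') (intI θ), FI θ', FI θ,
          abs_of_nonneg (by linarith [Fmono h])]
      · have e : (fun ω => |(if Y ω ≤ θ' then (1:ℝ) else 0) - (if Y ω ≤ θ then 1 else 0)|)
            = fun ω => (if Y ω ≤ θ then (1:ℝ) else 0) - (if Y ω ≤ θ' then 1 else 0) := by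
          funext ω
          rcases le_or_gt (Y ω) θ' with h2 | h2
          · simp [h2, le_trans h2 h]
          · rcases le_or_gt (Y ω) θ with h1 | h1
            · simp [not_le.2 h2, h1]
            · simp [not_le.2 h1, not_le.2 h2]
        rw [e, integral_sub (intI θ) (intI θ'), FI θ', FI θ,
          abs_of_nonpos (by linarith [Fmono h])]
        ring
    rw [hds]
    refine habs.trans ?_
    rw [integral_const_mul, hind]
  rw [hasDerivAt_iff_tendsto_slope]
  have T1 : Tendsto (fun θ' => -θ * slope F θ θ') (nhdsWithin θ {θ}ᶜ) (nhds (-θ * fθ)) :=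
    (hasDerivAt_iff_tendsto_slope.mp hfθ).const_mul (-θ)
  have Fcont : Tendsto (fun θ' => |F θ' - F θ|) (nhdsWithin θ {θ}ᶜ) (nhds 0) := by
    have h0 : Tendsto F (nhdsWithin θ {θ}ᶜ) (nhds (F θ)) :=
      (hfθ.continuousAt.tendsto).mono_left nhdsWithin_le_nhds
    have h1 : Tendsto (fun θ' => F θ' - F θ) (nhdsWithin θ {θ}ᶜ) (nhds (F θ - F θ)) :=
      h0.sub tendsto_const_nhds
    rw [sub_self] at h1
    simpa using h1.abs
  have T2 : Tendsto (fun θ' => (G θ' - G θ + θ * (F θ' - F θ)) / (θ' - θ))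
      (nhdsWithin θ {θ}ᶜ) (nhds 0) := by
    refine squeeze_zero_norm' ?_ Fcont
    filter_upwards [self_mem_nhdsWithin] with θ' (hθ' : θ' ∈ ({θ}ᶜ : Set ℝ))
    have hne : θ' - θ ≠ 0 := sub_ne_zero.2 hθ'
    rw [Real.norm_eq_abs, abs_div]
    rw [div_le_iff₀ (abs_pos.2 hne)]
    calc |G θ' - G θ + θ * (F θ' - F θ)| ≤ |θ' - θ| * |F θ' - F θ| := est θ'
    _ = |F θ' - F θ| * |θ' - θ| := by ring
  have key : Tendsto (fun θ' => -θ * slope F θ θ'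
      + (G θ' - G θ + θ * (F θ' - F θ)) / (θ' - θ)) (nhdsWithin θ {θ}ᶜ) (nhds (-θ * fθ)) := by
    simpa using T1.add T2
  apply key.congr'
  filter_upwards [self_mem_nhdsWithin] with θ' (hθ' : θ' ∈ ({θ}ᶜ : Set ℝ))
  have hne : θ' - θ ≠ 0 := sub_ne_zero.2 hθ'
  rw [slope_def_field, slope_def_field]
  field_simp
  ring


theorem stmt_6 {Ω : Type*} [MeasureSpace Ω] (μ : Measure Ω) [IsProbabilityMeasure μ]
    (X : Ω → ℝ) (hX : Integrable X μ)
    (F : ℝ → ℝ) (hF : ∀ t : ℝ, F t = (μ {ω | X ω ≤ t}).toReal)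
    (f f' : ℝ → ℝ) (hf : ∀ t : ℝ, HasDerivAt F (f t) t)
    (hf' : ∀ t : ℝ, HasDerivAt f (f' t) t)
    (Φ : ℝ → ℝ) (hΦ : ∀ t : ℝ, Φ t = f t + t * f' t)
    (MΦ : ℝ) (hMΦ : ∀ t : ℝ, |Φ t| ≤ MΦ)
    (α : ℝ) (hα : α ∈ Set.Ioo (0 : ℝ) 1)
    (θα : ℝ) (hθα : F θα = α)
    (ϑα : ℝ) (hϑα : ϑα = (1 - α)⁻¹ * ∫ ω, (if θα ≤ X ω then X ω else 0) ∂μ)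
    (H : ℝ → ℝ)
    (hH : ∀ θ : ℝ, H θ = (1 - α)⁻¹ * ∫ ω, (if θ < X ω then X ω else 0) ∂μ) :
    H θα = ϑα ∧
      ∀ θ : ℝ, |H θ - H θα + θα * f θα / (1 - α) * (θ - θα)| ≤
        MΦ / (2 * (1 - α)) * (θ - θα) ^ 2 := by
  obtain ⟨hα0, hα1⟩ := hα
  have h1α : (0:ℝ) < 1 - α := by linarith
  obtain ⟨Y, hYm', hXY⟩ : ∃ Y, StronglyMeasurable Y ∧ X =ᵐ[μ] Y :=
    ⟨hX.1.mk X, hX.1.stronglyMeasurable_mk, hX.1.ae_eq_mk⟩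
  have hYm : Measurable Y := hYm'.measurable
  have hYint : Integrable Y μ := hX.congr hXY
  have hFY : ∀ t : ℝ, F t = (μ {ω | Y ω ≤ t}).toReal := by
    intro t
    rw [hF t]
    congr 1
    apply measure_congr
    rw [Filter.eventuallyEq_set]
    filter_upwards [hXY] with ω h
    simp [Set.mem_setOf_eq, h]
  have hGY : ∀ t : ℝ, (∫ ω, (if t < X ω then X ω else 0) ∂μ)
      = ∫ ω, (if t < Y ω then Y ω else 0) ∂μ := fun t =>
    integral_congr_ae (hXY.mono fun ω h => by simp only [h])
  -- the law has no atom at θα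
  have hnull : μ {ω | Y ω = θα} = 0 := by
    have hb : ∀ t < θα, (μ {ω | Y ω = θα}).toReal ≤ F θα - F t := by
      intro t ht
      have hsub : {ω | Y ω = θα} ⊆ {ω | Y ω ≤ θα} \ {ω | Y ω ≤ t} := by
        intro ω (h : Y ω = θα)
        refine ⟨le_of_eq h, fun (h2 : Y ω ≤ t) => ?_⟩
        rw [h] at h2; linarith
      have hmono : {ω | Y ω ≤ t} ⊆ {ω | Y ω ≤ θα} := fun ω h => le_trans h (le_of_lt ht)
      have hd : μ ({ω | Y ω ≤ θα} \ {ω | Y ω ≤ t}) = μ {ω | Y ω ≤ θα} - μ {ω | Y ω ≤ t} :=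
        measure_diff hmono (hYm measurableSet_Iic).nullMeasurableSet (measure_ne_top μ _)
      calc (μ {ω | Y ω = θα}).toReal
          ≤ (μ ({ω | Y ω ≤ θα} \ {ω | Y ω ≤ t})).toReal :=
            ENNReal.toReal_mono (measure_ne_top μ _) (measure_mono hsub)
        _ = F θα - F t := by
            rw [hd, ENNReal.toReal_sub_of_le (measure_mono hmono) (measure_ne_top μ _),
              hFY, hFY]
    have hlim : Filter.Tendsto (fun t => F θα - F t) (nhdsWithin θα (Set.Iio θα)) (nhds 0) := by
      have h0 : Filter.Tendsto F (nhdsWithin θα (Set.Iio θα)) (nhds (F θα)) :=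
        ((hf θα).continuousAt.tendsto).mono_left nhdsWithin_le_nhds
      have h1 : Filter.Tendsto (fun t => F θα - F t) (nhdsWithin θα (Set.Iio θα))
          (nhds (F θα - F θα)) := tendsto_const_nhds.sub h0
      rw [sub_self] at h1
      exact h1
    have hle : (μ {ω | Y ω = θα}).toReal ≤ 0 :=
      ge_of_tendsto hlim (Filter.eventually_of_mem self_mem_nhdsWithin fun t ht => hb t ht)
    have h0 : (μ {ω | Y ω = θα}).toReal = 0 := le_antisymm hle ENNReal.toReal_nonneg
    exact (ENNReal.toReal_eq_zero_iff _).mp h0 |>.resolve_right (measure_ne_top μ _)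
  have hae : ∀ᵐ ω ∂μ, Y ω ≠ θα := by
    rw [MeasureTheory.ae_iff]
    simp only [ne_eq, not_not]
    exact hnull
  have hpart1 : H θα = ϑα := by
    rw [hH θα, hϑα]
    congr 1
    apply integral_congr_ae
    filter_upwards [hXY, hae] with ω h1 h2
    rcases lt_trichotomy (X ω) θα with h | h | h
    · rw [if_neg (not_lt.2 (le_of_lt h)), if_neg (not_le.2 h)]
    · exact absurd (h1 ▸ h) h2
    · rw [if_pos h, if_pos (le_of_lt h)]
  refine ⟨hpart1, ?_⟩
  -- derivative of H
  have hHeq : H = fun t => (1 - α)⁻¹ * ∫ ω, (if t < Y ω then Y ω else 0) ∂μ := by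
    funext t; rw [hH t, hGY t]
  set g : ℝ → ℝ := fun t => -(1 - α)⁻¹ * (t * f t) with hgdef
  have hHder : ∀ t : ℝ, HasDerivAt H (g t) t := by
    intro t
    have h0 := (auxDeriv μ Y hYm hYint F hFY t (f t) (hf t)).const_mul ((1 - α)⁻¹)
    rw [hHeq]
    exact h0.congr_deriv (by rw [hgdef]; ring)
  have hgder : ∀ t : ℝ, HasDerivAt g (-(1 - α)⁻¹ * Φ t) t := by
    intro t
    have h1 : HasDerivAt (fun s => s * f s) (1 * f t + t * f' t) t :=
      (hasDerivAt_id t).mul (hf' t)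
    have h2 := h1.const_mul (-(1 - α)⁻¹)
    rw [hgdef]
    exact h2.congr_deriv (by rw [hΦ]; ring)
  have fcont : Continuous f := by
    have hdiff : Differentiable ℝ f := fun t => (hf' t).differentiableAt
    exact hdiff.continuous
  have gcont : Continuous g := by
    rw [hgdef]
    exact continuous_const.mul (continuous_id.mul fcont)
  have hMΦ0 : (0:ℝ) ≤ MΦ := le_trans (abs_nonneg _) (hMΦ 0)
  have hcinv : (0:ℝ) < (1 - α)⁻¹ := inv_pos.2 h1α
  have hLip : ∀ t : ℝ, |g t - g θα| ≤ ((1 - α)⁻¹ * MΦ) * |t - θα| := by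
    intro t
    have hres := Convex.norm_image_sub_le_of_norm_hasDerivWithin_le
      (f := g) (f' := fun t => -(1 - α)⁻¹ * Φ t) (s := Set.univ) (C := (1 - α)⁻¹ * MΦ)
      (fun x _ => (hgder x).hasDerivWithinAt) (fun x _ => by
        rw [Real.norm_eq_abs, abs_mul, abs_neg, abs_of_pos hcinv]
        exact mul_le_mul_of_nonneg_left (hMΦ x) (le_of_lt hcinv))
      convex_univ (Set.mem_univ θα) (Set.mem_univ t)
    simpa [Real.norm_eq_abs] using hres
  intro θ
  have hψ : ∀ t : ℝ, HasDerivAt (fun s => H s - g θα * s) (g t - g θα) t := by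
    intro t
    have := (hHder t).sub ((hasDerivAt_id t).const_mul (g θα))
    simp only [mul_one] at this
    exact this
  have h2 := auxTaylor (fun s => H s - g θα * s) (fun t => g t - g θα) hψ
    (gcont.sub continuous_const) θα ((1 - α)⁻¹ * MΦ)
    (mul_nonneg (le_of_lt hcinv) hMΦ0) (fun t => hLip t) θ
  have e1 : H θ - g θα * θ - (H θα - g θα * θα)
      = H θ - H θα + θα * f θα / (1 - α) * (θ - θα) := by
    rw [hgdef]
    show H θ - -(1 - α)⁻¹ * (θα * f θα) * θ - (H θα - -(1 - α)⁻¹ * (θα * f θα) * θα) = _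
    rw [div_eq_mul_inv]
    ring
  have e2 : (1 - α)⁻¹ * MΦ / 2 * (θ - θα) ^ 2 = MΦ / (2 * (1 - α)) * (θ - θα) ^ 2 := by
    rw [div_eq_mul_inv, div_eq_mul_inv, mul_inv]
    ring
  rw [e1, e2] at h2
  exact h2
end

section
/- Let σ_α²(θ) = (1-α)^{-2} Var(X·1_{X>θ}) and τ_α²(θ) = (1-α)^{-2} Var((X-θ)·1_{X>θ}). Then τ_α²(θ_α) = σ_α²(θ_α) - (α θ_α/(1-α))(2ϑ_α - θ_α). In particular, if θ_α ≥ 0 then τ_α²(θ_α) ≤ σ_α²(θ_α). -/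
open MeasureTheory

theorem stmt_7 {Ω : Type*} [MeasureSpace Ω] (μ : Measure Ω) [IsProbabilityMeasure μ]
    (X : Ω → ℝ) (hXmeas : Measurable X)
    (hX2 : Integrable (fun ω => X ω ^ 2) μ)
    (α : ℝ) (hα : α ∈ Set.Ioo (0 : ℝ) 1)
    (θα : ℝ) (hθα : (μ {ω | θα < X ω}).toReal = 1 - α)
    (hcont : μ {ω | X ω = θα} = 0)
    (ϑα : ℝ) (hϑα : ϑα = (1 - α)⁻¹ * ∫ ω, (if θα ≤ X ω then X ω else 0) ∂μ)
    (σ2 τ2 : ℝ → ℝ)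
    (hσ2 : ∀ θ : ℝ, σ2 θ = (1 - α)⁻¹ ^ 2 *
      ((∫ ω, (if θ < X ω then X ω else 0) ^ 2 ∂μ) -
        (∫ ω, (if θ < X ω then X ω else 0) ∂μ) ^ 2))
    (hτ2 : ∀ θ : ℝ, τ2 θ = (1 - α)⁻¹ ^ 2 *
      ((∫ ω, (if θ < X ω then X ω - θ else 0) ^ 2 ∂μ) -
        (∫ ω, (if θ < X ω then X ω - θ else 0) ∂μ) ^ 2)) :
    τ2 θα = σ2 θα - α * θα / (1 - α) * (2 * ϑα - θα) ∧
      (0 ≤ θα → τ2 θα ≤ σ2 θα) := by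
  obtain ⟨hα0, hα1⟩ := hα
  have hp : (0:ℝ) < 1 - α := by linarith
  have hpne : (1:ℝ) - α ≠ 0 := ne_of_gt hp
  set s : Set Ω := {ω | θα < X ω} with hs_def
  have hs : MeasurableSet s := hXmeas measurableSet_Ioi
  -- integrability
  have hXint : Integrable X μ :=
    ((memLp_two_iff_integrable_sq hXmeas.aestronglyMeasurable).2 hX2).integrable (by norm_num)
  have hindX : Integrable (fun ω => if θα < X ω then X ω else 0) μ := by
    have := hXint.indicator hs
    refine this.congr (Filter.Eventually.of_forall fun ω => ?_)
    simp [Set.indicator_apply, hs_def]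
  have hindX2 : Integrable (fun ω => if θα < X ω then X ω ^ 2 else 0) μ := by
    have := hX2.indicator hs
    refine this.congr (Filter.Eventually.of_forall fun ω => ?_)
    simp [Set.indicator_apply, hs_def]
  have hindc : Integrable (fun ω => if θα < X ω then (1:ℝ) else 0) μ := by
    have : Integrable (fun _ : Ω => (1:ℝ)) μ := integrable_const 1
    have := this.indicator hs
    refine this.congr (Filter.Eventually.of_forall fun ω => ?_)
    simp [Set.indicator_apply, hs_def]
  set I1 : ℝ := ∫ ω, (if θα < X ω then X ω else 0) ∂μ with hI1
  set I2 : ℝ := ∫ ω, (if θα < X ω then X ω ^ 2 else 0) ∂μ with hI2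
  -- integral of indicator of s
  have hIc : (∫ ω, (if θα < X ω then (1:ℝ) else 0) ∂μ) = 1 - α := by
    rw [← hθα]
    have : (fun ω => if θα < X ω then (1:ℝ) else 0) = s.indicator (fun _ => (1:ℝ)) := by
      funext ω; simp [Set.indicator_apply, hs_def]
    rw [this, integral_indicator_const _ hs]
    simp
    rfl
  -- first moment of shifted variable
  have hA : (∫ ω, (if θα < X ω then X ω - θα else 0) ∂μ) = I1 - θα * (1 - α) := by
    have heq : (fun ω => if θα < X ω then X ω - θα else 0)
        = fun ω => (if θα < X ω then X ω else 0) - θα * (if θα < X ω then (1:ℝ) else 0) := by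
      funext ω; split <;> ring
    rw [heq, integral_sub hindX (hindc.const_mul θα), integral_const_mul, hIc, hI1]
  -- second moment of shifted variable
  have hB : (∫ ω, (if θα < X ω then X ω - θα else 0) ^ 2 ∂μ)
      = I2 - 2 * θα * I1 + θα ^ 2 * (1 - α) := by
    have heq : (fun ω => (if θα < X ω then X ω - θα else 0) ^ 2)
        = fun ω => ((if θα < X ω then X ω ^ 2 else 0)
            - 2 * θα * (if θα < X ω then X ω else 0))
            + θα ^ 2 * (if θα < X ω then (1:ℝ) else 0) := by
      funext ω; split <;> ring
    have h1 : Integrable (fun ω => (if θα < X ω then X ω ^ 2 else 0)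
        - 2 * θα * (if θα < X ω then X ω else 0)) μ := hindX2.sub (hindX.const_mul _)
    have h2 : Integrable (fun ω => θα ^ 2 * (if θα < X ω then (1:ℝ) else 0)) μ :=
      hindc.const_mul _
    rw [heq, integral_add h1 h2, integral_sub hindX2 (hindX.const_mul _),
      integral_const_mul, integral_const_mul, hIc, hI1, hI2]
  -- the square of the indicator integrand
  have hsq : (∫ ω, (if θα < X ω then X ω else 0) ^ 2 ∂μ) = I2 := by
    rw [hI2]
    congr 1; funext ω; split <;> simp
  -- superquantile in terms of I1
  have hϑ : ϑα = (1 - α)⁻¹ * I1 := by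
    rw [hϑα]
    congr 1
    refine integral_congr_ae ?_
    have hne : ∀ᵐ ω ∂μ, X ω ≠ θα := by
      rw [ae_iff]; simpa using hcont
    filter_upwards [hne] with ω hω
    have : (θα ≤ X ω) ↔ (θα < X ω) := ⟨fun h => lt_of_le_of_ne h (Ne.symm hω), le_of_lt⟩
    simp only [this]
  -- the main identity
  have hmain : τ2 θα = σ2 θα - α * θα / (1 - α) * (2 * ϑα - θα) := by
    rw [hτ2, hσ2, hA, hB, hsq, hϑ, ← hI1]
    field_simp
    ring
  refine ⟨hmain, fun hθ0 => ?_⟩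
  -- lower bound: I1 ≥ θα * (1 - α)
  have hI1ge : θα * (1 - α) ≤ I1 := by
    calc θα * (1 - α) = ∫ ω, θα * (if θα < X ω then (1:ℝ) else 0) ∂μ := by
          rw [integral_const_mul, hIc]
      _ ≤ I1 := by
          refine integral_mono (hindc.const_mul θα) hindX fun ω => ?_
          by_cases h : θα < X ω
          · simp [h, le_of_lt h]
          · simp [h]
  have hϑge : θα ≤ ϑα := by
    rw [hϑ, inv_mul_eq_div, le_div_iff₀ hp]
    linarith
  have hnn : 0 ≤ α * θα / (1 - α) * (2 * ϑα - θα) := by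
    have h1 : 0 ≤ 2 * ϑα - θα := by linarith
    have h2 : 0 ≤ α * θα / (1 - α) := by positivity
    exact mul_nonneg h2 h1
  linarith [hmain]
end

section
/- Let (b_n) ⊂ (0,1) with Σ b_n = ∞ and Σ b_n² < ∞, P_n = ∏_{k=1}^n (1-b_k)^{-1}, and let (ε_n) be a martingale difference sequence with sup_n E[ε_{n+1}²|F_n] < ∞ a.s. Then (1/P_n) Σ_{k=1}^n b_k P_k ε_{k+1} → 0 almost surely. -/
open MeasureTheory Filter
open Finset

lemma kron {b P x : ℕ → ℝ} (hb : ∀ n, 0 < b n ∧ b n < 1)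
    (hdiv : ¬ Summable b)
    (hP : ∀ n, P n = ∏ k ∈ Finset.Icc 1 n, (1 - b k)⁻¹) {c : ℝ}
    (hconv : Tendsto (fun n => ∑ k ∈ Finset.Icc 1 n, b k * x k) atTop (nhds c)) :
    Tendsto (fun n : ℕ => (1 / P n) * ∑ k ∈ Finset.Icc 1 n, b k * P k * x k)
      atTop (nhds 0) := by
  have hb0 : ∀ n, (0:ℝ) < 1 - b n := fun n => by have := (hb n).2; linarith
  have hP0 : P 0 = 1 := by simp [hP]
  have hPsucc : ∀ n, P (n+1) = P n * (1 - b (n+1))⁻¹ := by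
    intro n
    rw [hP, hP, ← Finset.prod_Icc_succ_top (Nat.succ_le_succ (Nat.zero_le n))]
  have hPpos : ∀ n, 0 < P n := by
    intro n
    rw [hP]
    exact Finset.prod_pos fun k _ => inv_pos.2 (hb0 k)
  have hfac : ∀ n, (1:ℝ) + b (n+1) ≤ (1 - b (n+1))⁻¹ := by
    intro n
    have h1 : ((1:ℝ) + b (n+1)) * (1 - b (n+1)) ≤ 1 := by
      nlinarith [sq_nonneg (b (n+1))]
    have h2 := mul_le_mul_of_nonneg_right h1 (inv_nonneg.2 (hb0 (n+1)).le)
    rwa [mul_assoc, mul_inv_cancel₀ (hb0 (n+1)).ne', mul_one, one_mul] at h2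
  have hPmono : Monotone P := by
    apply monotone_nat_of_le_succ
    intro n
    rw [hPsucc]
    nth_rewrite 1 [← mul_one (P n)]
    apply mul_le_mul_of_nonneg_left _ (hPpos n).le
    linarith [hfac n, (hb (n+1)).1]
  have hP1 : ∀ n, (1:ℝ) ≤ P n := fun n => hP0 ▸ hPmono (Nat.zero_le n)
  have hPge : ∀ n, 1 + ∑ k ∈ Finset.Icc 1 n, b k ≤ P n := by
    intro n
    induction n with
    | zero => simp [hP0]
    | succ n ih =>
      rw [Finset.sum_Icc_succ_top (Nat.succ_le_succ (Nat.zero_le n)), hPsucc]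
      calc 1 + (∑ k ∈ Finset.Icc 1 n, b k + b (n+1))
          ≤ P n + b (n+1) * P n := by nlinarith [(hb (n+1)).1, hP1 n]
        _ = P n * (1 + b (n+1)) := by ring
        _ ≤ P n * (1 - b (n+1))⁻¹ :=
            mul_le_mul_of_nonneg_left (hfac n) (hPpos n).le
  -- P tends to infinity
  have hIcc_range : ∀ (f : ℕ → ℝ) (n : ℕ),
      ∑ k ∈ Finset.Icc 1 n, f k = ∑ i ∈ Finset.range n, f (i+1) := by
    intro f n
    rw [show Finset.Icc 1 n = Finset.Ico 1 (n+1) from rfl,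
      Finset.sum_Ico_eq_sum_range]
    simp [add_comm]
  have hbshift : ¬ Summable (fun i => b (i+1)) := by
    rw [summable_nat_add_iff]
    exact hdiv
  have hIccsum : Tendsto (fun n => ∑ k ∈ Finset.Icc 1 n, b k) atTop atTop := by
    have := (not_summable_iff_tendsto_nat_atTop_of_nonneg
      (fun n => (hb (n+1)).1.le)).1 hbshift
    exact this.congr fun n => (hIcc_range b n).symm
  have hPtop : Tendsto P atTop atTop :=
    tendsto_atTop_mono hPge (tendsto_atTop_add_const_left _ 1 hIccsum)
  -- notation
  set S : ℕ → ℝ := fun n => ∑ k ∈ Finset.Icc 1 n, b k * x k with hS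
  set w : ℕ → ℝ := fun j => P (j+1) - P j with hw
  have hwnn : ∀ j, 0 ≤ w j := fun j => sub_nonneg.2 (hPmono (Nat.le_succ j))
  -- Abel summation identity
  have habel : ∀ n, ∑ k ∈ Finset.Icc 1 n, b k * P k * x k
      = P n * S n - ∑ j ∈ Finset.range n, w j * S j := by
    intro n
    induction n with
    | zero => simp [hS, hP0]
    | succ n ih =>
      rw [Finset.sum_Icc_succ_top (Nat.succ_le_succ (Nat.zero_le n)), ih,
        Finset.sum_range_succ]
      have hSsucc : S (n+1) = S n + b (n+1) * x (n+1) := by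
        simp only [hS]
        rw [Finset.sum_Icc_succ_top (Nat.succ_le_succ (Nat.zero_le n))]
      rw [hSsucc]
      simp only [hw]
      ring
  -- sum of weights
  have hwsum : ∀ n, ∑ j ∈ Finset.range n, w j = P n - 1 := by
    intro n
    rw [Finset.sum_range_sub (f := P), hP0]
  have hwtop : Tendsto (fun n => ∑ j ∈ Finset.range n, w j) atTop atTop := by
    simp only [hwsum]
    exact hPtop.atTop_add tendsto_const_nhds
  -- weighted average of S tends to c
  have hSc : Tendsto (fun n => S n - c) atTop (nhds 0) := by
    rw [show (0:ℝ) = c - c by ring]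
    exact hconv.sub tendsto_const_nhds
  have hlo : (fun j => w j * (S j - c)) =o[atTop] w := by
    have h1 : (fun j => (S j - c)) =o[atTop] (fun _ => (1:ℝ)) :=
      (Asymptotics.isLittleO_one_iff ℝ).2 hSc
    have := h1.mul_isBigO (Asymptotics.isBigO_refl w atTop)
    simpa [mul_comm] using this
  have hsumlo : (fun n => ∑ j ∈ Finset.range n, w j * (S j - c))
      =o[atTop] (fun n => ∑ j ∈ Finset.range n, w j) :=
    hlo.sum_range hwnn hwtop
  have hratio : Tendsto (fun n => (∑ j ∈ Finset.range n, w j * (S j - c))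
      / (∑ j ∈ Finset.range n, w j)) atTop (nhds 0) := by
    apply hsumlo.tendsto_div_nhds_zero
  have hinvP : Tendsto (fun n => 1 / P n) atTop (nhds 0) :=
    tendsto_const_nhds.div_atTop hPtop
  have hfrac : Tendsto (fun n => (P n - 1) / P n) atTop (nhds 1) := by
    have h : Tendsto (fun n => 1 - 1 / P n) atTop (nhds (1 - 0)) :=
      tendsto_const_nhds.sub hinvP
    rw [sub_zero] at h
    apply h.congr
    intro n
    rw [one_sub_div (hPpos n).ne']
  -- main computation
  have hmain : Tendsto (fun n => (1 / P n) * ∑ j ∈ Finset.range n, w j * S j)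
      atTop (nhds c) := by
    have hdecomp : ∀ n, (1 / P n) * ∑ j ∈ Finset.range n, w j * S j
        = ((∑ j ∈ Finset.range n, w j * (S j - c)) / (∑ j ∈ Finset.range n, w j))
            * ((P n - 1) / P n)
          + c * ((P n - 1) / P n) := by
      intro n
      have hsplit : ∑ j ∈ Finset.range n, w j * S j
          = (∑ j ∈ Finset.range n, w j * (S j - c)) + c * (P n - 1) := by
        rw [← hwsum, Finset.mul_sum, ← Finset.sum_add_distrib]
        apply Finset.sum_congr rfl
        intro j _
        ring
      rcases eq_or_ne n 0 with rfl | hn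
      · simp [hP0, hS]
      · have hPn1 : P n - 1 ≠ 0 := by
          have hn1 : 1 ≤ n := Nat.one_le_iff_ne_zero.2 hn
          have h1 : (1:ℝ) < P 1 := by
            rw [hPsucc 0, hP0, one_mul]
            exact (one_lt_inv₀ (hb0 1)).2 (by linarith [(hb 1).1])
          have h2 := hPmono hn1
          intro h
          linarith
        rw [hsplit, hwsum]
        have hPn : P n ≠ 0 := (hPpos n).ne'
        field_simp
    rw [show c = 0 * 1 + c * 1 by ring]
    apply Tendsto.congr (fun n => (hdecomp n).symm)
    exact (hratio.mul hfrac).add (tendsto_const_nhds.mul hfrac)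
  -- conclude
  have hfin : Tendsto (fun n => S n - (1 / P n) * ∑ j ∈ Finset.range n, w j * S j)
      atTop (nhds 0) := by
    rw [show (0:ℝ) = c - c by ring]
    exact hconv.sub hmain
  apply hfin.congr
  intro n
  rw [habel n]
  have hPn : P n ≠ 0 := (hPpos n).ne'
  field_simp

theorem stmt_12 {Ω : Type*} {m : MeasurableSpace Ω} (μ : Measure Ω)
    [IsProbabilityMeasure μ] (ℱ : Filtration ℕ m)
    (ε : ℕ → Ω → ℝ)
    (hadapted : ∀ n : ℕ, StronglyMeasurable[ℱ (n + 1)] (ε (n + 1)))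
    (hint : ∀ n : ℕ, Integrable (ε n) μ)
    (hint2 : ∀ n : ℕ, Integrable (fun ω => (ε n ω) ^ 2) μ)
    (hmds : ∀ n : ℕ, μ[ε (n + 1) | ℱ n] =ᵐ[μ] 0)
    (C : ℝ)
    (hC : ∀ n : ℕ, ∀ᵐ ω ∂μ, (μ[fun ω' => (ε (n + 1) ω') ^ 2 | ℱ n]) ω ≤ C)
    (b : ℕ → ℝ) (hb : ∀ n, 0 < b n ∧ b n < 1)
    (hdiv : ¬ Summable b) (hsq : Summable (fun n => b n ^ 2))
    (P : ℕ → ℝ) (hP : ∀ n, P n = ∏ k ∈ Finset.Icc 1 n, (1 - b k)⁻¹) :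
    ∀ᵐ ω ∂μ,
      Tendsto (fun n : ℕ => (1 / P n) * ∑ k ∈ Finset.Icc 1 n, b k * P k * ε (k + 1) ω)
        atTop (nhds 0) := by
  classical
  set D : ℝ := max C 0 with hD
  have hL2 : ∀ n, MemLp (ε n) 2 μ := fun n =>
    (memLp_two_iff_integrable_sq (hint n).aestronglyMeasurable).2 (hint2 n)
  -- second moment bound
  have hEsq : ∀ n, ∫ ω, (ε (n+1) ω) ^ 2 ∂μ ≤ D := by
    intro n
    have h1 : ∫ ω, (ε (n+1) ω) ^ 2 ∂μ
        = ∫ ω, (μ[fun ω' => (ε (n+1) ω') ^ 2 | ℱ n]) ω ∂μ :=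
      (integral_condExp (ℱ.le n)).symm
    rw [h1]
    calc ∫ ω, (μ[fun ω' => (ε (n+1) ω') ^ 2 | ℱ n]) ω ∂μ
        ≤ ∫ _, D ∂μ := by
          apply integral_mono_ae integrable_condExp (integrable_const D)
          filter_upwards [hC n] with ω hω
          exact le_trans hω (le_max_left _ _)
      _ = D := by simp
  -- product integrability
  have hprodint : ∀ i j, Integrable (fun ω => ε i ω * ε j ω) μ := by
    intro i j
    have h := ((hL2 j).smul (hL2 i)
      (p := 2) (q := 2) (r := 1)  : MemLp (ε i • ε j) 1 μ)
    rw [memLp_one_iff_integrable] at h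
    exact h
  -- orthogonality
  have horth : ∀ k l, k < l → ∫ ω, ε (k+2) ω * ε (l+2) ω ∂μ = 0 := by
    intro k l hkl
    have hm := ℱ.le (l+1)
    have hsm : StronglyMeasurable[ℱ (l+1)] (ε (k+2)) :=
      (hadapted (k+1)).mono (ℱ.mono (by omega))
    have hpull : μ[(fun ω => ε (k+2) ω * ε (l+2) ω) | ℱ (l+1)]
        =ᵐ[μ] fun ω => ε (k+2) ω * (μ[ε (l+2) | ℱ (l+1)]) ω := by
      exact condExp_mul_of_stronglyMeasurable_left hsm (hprodint (k+2) (l+2)) (hint (l+2))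
    have hz : μ[(fun ω => ε (k+2) ω * ε (l+2) ω) | ℱ (l+1)] =ᵐ[μ] 0 := by
      filter_upwards [hpull, hmds (l+1)] with ω h1 h2
      simp [h1, h2]
    calc ∫ ω, ε (k+2) ω * ε (l+2) ω ∂μ
        = ∫ ω, (μ[(fun ω => ε (k+2) ω * ε (l+2) ω) | ℱ (l+1)]) ω ∂μ :=
          (integral_condExp hm).symm
      _ = ∫ ω, (0:ℝ) ∂μ := integral_congr_ae hz
      _ = 0 := integral_zero _ _
  -- shifted filtration and martingale
  set G : MeasureTheory.Filtration ℕ m :=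
    ⟨fun n => ℱ (n+1), fun i j hij => ℱ.mono (Nat.add_le_add_right hij 1),
      fun n => ℱ.le (n+1)⟩ with hG
  set f : ℕ → Ω → ℝ := fun n ω => ∑ k ∈ Finset.range n, b (k+1) * ε (k+2) ω with hf
  have hfint : ∀ n, Integrable (f n) μ := by
    intro n
    apply integrable_finset_sum
    intro k _
    exact (hint (k+2)).const_mul _
  have hfadp : ∀ n, StronglyMeasurable[G n] (f n) := by
    intro n
    apply Finset.stronglyMeasurable_fun_sum
    intro k hk
    have hk' : k + 2 ≤ n + 1 := by
      have := Finset.mem_range.1 hk; omega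
    exact (stronglyMeasurable_const.mul ((hadapted (k+1)).mono (ℱ.mono hk')))
  have hmart : Martingale f G μ := by
    apply martingale_nat hfadp hfint
    intro n
    have hstep : f (n+1) = f n + fun ω => b (n+1) * ε (n+2) ω := by
      funext ω
      simp only [hf, Finset.sum_range_succ, Pi.add_apply]
    rw [hstep]
    have h1 : μ[f n + (fun ω => b (n+1) * ε (n+2) ω) | G n]
        =ᵐ[μ] μ[f n | G n] + μ[(fun ω => b (n+1) * ε (n+2) ω) | G n] :=
      condExp_add (hfint n) ((hint (n+2)).const_mul _) _
    have h2 : μ[f n | G n] =ᵐ[μ] f n :=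
      (condExp_of_stronglyMeasurable (G.le n) (hfadp n) (hfint n)).symm ▸
        EventuallyEq.refl _ _
    have h2' : μ[f n | G n] = f n :=
      condExp_of_stronglyMeasurable (G.le n) (hfadp n) (hfint n)
    have h3 : μ[(fun ω => b (n+1) * ε (n+2) ω) | G n] =ᵐ[μ] 0 := by
      have hsmul : (fun ω => b (n+1) * ε (n+2) ω) = b (n+1) • ε (n+2) := rfl
      rw [hsmul]
      refine (condExp_smul (b (n+1)) (ε (n+2)) _).trans ?_
      have : G n = ℱ (n+1) := rfl
      filter_upwards [hmds (n+1)] with ω hω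
      simp only [Pi.smul_apply, this] at *
      rw [hω]
      simp
    filter_upwards [h1, h3] with ω hω1 hω3
    rw [hω1, h2', Pi.add_apply, hω3]
    simp
  -- second moment of f n
  have hfL2 : ∀ n, MemLp (f n) 2 μ := by
    intro n
    apply memLp_finsetSum
    intro k _
    exact ((hL2 (k+2)).const_mul _)
  have hfsq : ∀ n, ∫ ω, (f n ω)^2 ∂μ ≤ D * ∑' k, b k ^ 2 := by
    intro n
    have hexp : ∀ ω, (f n ω)^2 = ∑ k ∈ Finset.range n, ∑ l ∈ Finset.range n,
        (b (k+1) * b (l+1)) * (ε (k+2) ω * ε (l+2) ω) := by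
      intro ω
      simp only [hf, sq, Finset.sum_mul_sum]
      apply Finset.sum_congr rfl; intro k _
      apply Finset.sum_congr rfl; intro l _
      ring
    have hterm : ∀ k l, Integrable
        (fun ω => (b (k+1) * b (l+1)) * (ε (k+2) ω * ε (l+2) ω)) μ :=
      fun k l => (hprodint (k+2) (l+2)).const_mul _
    have hint_eq : ∫ ω, (f n ω)^2 ∂μ
        = ∑ k ∈ Finset.range n, ∑ l ∈ Finset.range n,
            (b (k+1) * b (l+1)) * ∫ ω, ε (k+2) ω * ε (l+2) ω ∂μ := by
      simp only [hexp]
      rw [integral_finset_sum _ (fun k _ => integrable_finset_sum _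
        (fun l _ => hterm k l))]
      apply Finset.sum_congr rfl; intro k _
      rw [integral_finset_sum _ (fun l _ => hterm k l)]
      apply Finset.sum_congr rfl; intro l _
      rw [integral_const_mul]
    have hdiag : ∫ ω, (f n ω)^2 ∂μ
        = ∑ k ∈ Finset.range n, b (k+1)^2 * ∫ ω, (ε (k+2) ω)^2 ∂μ := by
      rw [hint_eq]
      apply Finset.sum_congr rfl
      intro k hk
      rw [Finset.sum_eq_single k]
      · simp only [sq]
      · intro l hl hlk
        rcases lt_or_gt_of_ne hlk with h | h
        · rw [show ∫ ω, ε (k+2) ω * ε (l+2) ω ∂μ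
              = ∫ ω, ε (l+2) ω * ε (k+2) ω ∂μ from
            integral_congr_ae (Filter.Eventually.of_forall fun ω => mul_comm _ _),
            horth l k h, mul_zero]
        · rw [horth k l h, mul_zero]
      · intro hkk
        exact absurd hk hkk
    rw [hdiag]
    have hD0 : 0 ≤ D := le_max_right _ _
    calc ∑ k ∈ Finset.range n, b (k+1)^2 * ∫ ω, (ε (k+2) ω)^2 ∂μ
        ≤ ∑ k ∈ Finset.range n, b (k+1)^2 * D := by
          apply Finset.sum_le_sum
          intro k _
          exact mul_le_mul_of_nonneg_left (hEsq (k+1)) (sq_nonneg _)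
      _ = D * ∑ k ∈ Finset.range n, b (k+1)^2 := by
          rw [Finset.mul_sum]
          exact Finset.sum_congr rfl fun k _ => mul_comm _ _
      _ ≤ D * ∑' k, b k ^ 2 := by
          apply mul_le_mul_of_nonneg_left _ hD0
          calc ∑ k ∈ Finset.range n, b (k+1)^2
              ≤ ∑ k ∈ Finset.range (n+1), b k ^2 := by
                rw [Finset.sum_range_succ']
                simp [sq_nonneg]
            _ ≤ ∑' k, b k ^ 2 := Summable.sum_le_tsum _ (fun k _ => sq_nonneg _) hsq
  -- L¹ bound
  set V : ℝ := D * ∑' k, b k ^ 2 with hV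
  set R : NNReal := ((1 + V)/2).toNNReal with hR
  have hbdd : ∀ n, eLpNorm (f n) 1 μ ≤ R := by
    intro n
    have h1 : ∫ ω, ‖f n ω‖ ∂μ ≤ (1 + V)/2 := by
      have hptw : ∀ ω, ‖f n ω‖ ≤ (1 + (f n ω)^2)/2 := by
        intro ω
        have := sq_nonneg (‖f n ω‖ - 1)
        have h2 : ‖f n ω‖^2 = (f n ω)^2 := by
          rw [Real.norm_eq_abs, sq_abs]
        nlinarith
      calc ∫ ω, ‖f n ω‖ ∂μ
          ≤ ∫ ω, (1 + (f n ω)^2)/2 ∂μ := by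
            apply integral_mono (hfint n).norm
            · exact ((integrable_const 1).add (hfL2 n).integrable_sq).div_const 2
            · exact hptw
        _ = (1 + ∫ ω, (f n ω)^2 ∂μ)/2 := by
            rw [integral_div, integral_add (integrable_const 1)
              (hfL2 n).integrable_sq]
            simp
        _ ≤ (1 + V)/2 := by linarith [hfsq n]
    have h2 : eLpNorm (f n) 1 μ = ENNReal.ofReal (∫ ω, ‖f n ω‖ ∂μ) := by
      rw [eLpNorm_one_eq_lintegral_enorm,
        ← ofReal_integral_norm_eq_lintegral_enorm (hfint n)]
    rw [h2, hR]
    calc ENNReal.ofReal (∫ ω, ‖f n ω‖ ∂μ) ≤ ENNReal.ofReal ((1+V)/2) :=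
        ENNReal.ofReal_le_ofReal h1
      _ = (((1+V)/2).toNNReal : ENNReal) := rfl
  -- convergence of f
  have hconv := hmart.submartingale.exists_ae_tendsto_of_bdd hbdd
  filter_upwards [hconv] with ω hω
  obtain ⟨c, hc⟩ := hω
  apply kron hb hdiv hP (c := c)
  apply hc.congr
  intro n
  simp only [hf]
  rw [show Finset.Icc 1 n = Finset.Ico 1 (n+1) from rfl,
    Finset.sum_Ico_eq_sum_range]
  apply Finset.sum_congr (by rw [Nat.add_sub_cancel])
  intro k _
  rw [show 1 + k = k + 1 from Nat.add_comm 1 k]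
end

section
/- Let b₁ ∈ (1/2, 1), b_n = b₁/n, P_n = ∏_{k=1}^n (1 - b_k)^{-1}. Then lim_{n→∞} (1/n^{2b₁-1}) Σ_{k=1}^n b_k² P_k² = (b₁²/(2b₁-1)) Γ(1-b₁)². -/
open Filter


lemma auxP (b₁ : ℝ) (hb0 : 0 < b₁) (hb' : b₁ < 1)
    (b : ℕ → ℝ) (hbn : ∀ n : ℕ, 1 ≤ n → b n = b₁ / n)
    (P : ℕ → ℝ) (hP : ∀ n, P n = ∏ k ∈ Finset.Icc 1 n, (1 - b k)⁻¹) :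
    Tendsto (fun n : ℕ => P n / (n : ℝ) ^ b₁) atTop (nhds (Real.Gamma (1 - b₁))) := by
  set Q : ℕ → ℝ := fun n => ∏ k ∈ Finset.Icc 1 n, ((k : ℝ) - b₁) with hQ
  have hQpos : ∀ n, 0 < Q n := by
    intro n
    apply Finset.prod_pos
    intro k hk
    have h1 : (1:ℕ) ≤ k := (Finset.mem_Icc.mp hk).1
    have : (1:ℝ) ≤ (k:ℝ) := by exact_mod_cast h1
    linarith
  have hPfact : ∀ n : ℕ, P n = (Nat.factorial n : ℝ) / Q n := by
    intro n
    rw [hP]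
    have h1 : ∀ k ∈ Finset.Icc 1 n, (1 - b k)⁻¹ = (k : ℝ) / ((k:ℝ) - b₁) := by
      intro k hk
      have hk1 : (1:ℕ) ≤ k := (Finset.mem_Icc.mp hk).1
      have hk1' : (1:ℝ) ≤ (k:ℝ) := by exact_mod_cast hk1
      have hkne : (k:ℝ) ≠ 0 := by linarith
      rw [hbn k hk1]
      have : 1 - b₁/(k:ℝ) = ((k:ℝ) - b₁)/k := by field_simp
      rw [this, inv_div]
    rw [Finset.prod_congr rfl h1, Finset.prod_div_distrib]
    congr 1
    rw [← Finset.prod_range_add_one_eq_factorial, Nat.cast_prod,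
      ← Finset.Ico_add_one_right_eq_Icc, Finset.prod_Ico_eq_prod_range]
    simp [add_comm]
  -- relate to GammaSeq
  have hkey : ∀ᶠ n : ℕ in atTop, Real.GammaSeq (1 - b₁) n * (((n:ℝ) + 1 - b₁) / n) = P n / (n:ℝ) ^ b₁ := by
    filter_upwards [eventually_ge_atTop 1] with n hn
    have hn0 : (0:ℝ) < n := by exact_mod_cast hn
    have hprod : ∏ j ∈ Finset.range (n + 1), ((1 - b₁) + (j:ℝ)) = Q n * ((n:ℝ) + 1 - b₁) := by
      have : ∏ j ∈ Finset.range (n + 1), ((1 - b₁) + (j:ℝ))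
          = ∏ k ∈ Finset.Icc 1 (n+1), ((k:ℝ) - b₁) := by
        rw [← Finset.Ico_add_one_right_eq_Icc, Finset.prod_Ico_eq_prod_range]
        apply Finset.prod_congr (by norm_num)
        intro j _
        push_cast
        ring
      rw [this, Finset.prod_Icc_succ_top (by omega)]
      push_cast
      ring
    rw [Real.GammaSeq, hprod, hPfact]
    have hQn : Q n ≠ 0 := (hQpos n).ne'
    have hnb : (n:ℝ) + 1 - b₁ ≠ 0 := by linarith
    have hrp : (n:ℝ) ^ (1 - b₁) = (n:ℝ) / (n:ℝ) ^ b₁ := by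
      rw [Real.rpow_sub hn0, Real.rpow_one]
    have hrpne : (n:ℝ) ^ b₁ ≠ 0 := (Real.rpow_pos_of_pos hn0 _).ne'
    rw [hrp]
    field_simp
  have hfrac : Tendsto (fun n : ℕ => ((n:ℝ) + 1 - b₁) / n) atTop (nhds 1) := by
    have h1 : Tendsto (fun n : ℕ => 1 + (1 - b₁) * (1 / (n:ℝ))) atTop (nhds 1) := by
      have := tendsto_one_div_atTop_nhds_zero_nat.const_mul (1 - b₁)
      have h2 := tendsto_const_nhds (x := (1:ℝ)) (f := atTop (α := ℕ))
      simpa using h2.add this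
    apply h1.congr'
    filter_upwards [eventually_ge_atTop 1] with n hn
    have hn0 : (0:ℝ) < n := by exact_mod_cast hn
    field_simp
    ring
  have := (Real.GammaSeq_tendsto_Gamma (1 - b₁)).mul hfrac
  rw [mul_one] at this
  exact this.congr' hkey

theorem stmt_14 (b₁ : ℝ) (hb : 1 / 2 < b₁) (hb' : b₁ < 1)
    (b : ℕ → ℝ) (hbn : ∀ n : ℕ, 1 ≤ n → b n = b₁ / n)
    (P : ℕ → ℝ) (hP : ∀ n, P n = ∏ k ∈ Finset.Icc 1 n, (1 - b k)⁻¹) :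
    Tendsto (fun n : ℕ =>
      (1 / (n : ℝ) ^ (2 * b₁ - 1)) * ∑ k ∈ Finset.Icc 1 n, (b k) ^ 2 * (P k) ^ 2)
      atTop (nhds (b₁ ^ 2 / (2 * b₁ - 1) * Real.Gamma (1 - b₁) ^ 2)) := by
  have hb0 : 0 < b₁ := by linarith
  set p : ℝ := 2 * b₁ - 1 with hp
  have hp0 : 0 < p := by rw [hp]; linarith
  have hpne : p ≠ 0 := hp0.ne'
  set Γ : ℝ := Real.Gamma (1 - b₁) with hΓ
  set C : ℝ := b₁ ^ 2 * Γ ^ 2 / p with hC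
  set g : ℕ → ℝ := fun k => ((k : ℝ) + 1) ^ p - (k : ℝ) ^ p with hg
  have hgpos : ∀ k, 0 < g k := by
    intro k
    have : (k:ℝ) ^ p < ((k:ℝ) + 1) ^ p :=
      Real.rpow_lt_rpow (Nat.cast_nonneg k) (by linarith) hp0
    simpa [hg] using sub_pos.mpr this
  have hgsum : ∀ n : ℕ, ∑ k ∈ Finset.range n, g k = (n : ℝ) ^ p := by
    intro n
    have h := Finset.sum_range_sub (f := fun k : ℕ => (k : ℝ) ^ p) n
    have he : ∀ k ∈ Finset.range n, g k = (((k+1:ℕ)):ℝ) ^ p - (k:ℝ) ^ p := by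
      intro k _
      rw [hg]
      push_cast
      ring_nf
    rw [Finset.sum_congr rfl he, h]
    simp [Real.zero_rpow hpne]
  have hgtop : Tendsto (fun n : ℕ => ∑ k ∈ Finset.range n, g k) atTop atTop := by
    simp only [hgsum]
    exact (tendsto_rpow_atTop hp0).comp tendsto_natCast_atTop_atTop
  -- the slope limit : g k / (k+1)^(p-1) → p
  have hslope : Tendsto (fun k : ℕ => g k / ((k:ℝ) + 1) ^ (p - 1)) atTop (nhds p) := by
    have hderiv : HasDerivAt (fun x : ℝ => x ^ p) p 1 := by
      have := Real.hasDerivAt_rpow_const (x := (1:ℝ)) (p := p) (Or.inl one_ne_zero)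
      simpa using this
    have hslope' := hasDerivAt_iff_tendsto_slope.mp hderiv
    have hcomp : Tendsto (fun k : ℕ => (k : ℝ) / ((k:ℝ) + 1)) atTop (nhdsWithin 1 {(1:ℝ)}ᶜ) := by
      rw [tendsto_nhdsWithin_iff]
      constructor
      · have h1 : Tendsto (fun k : ℕ => 1 - 1 / ((k:ℝ) + 1)) atTop (nhds 1) := by
          have := (tendsto_one_div_add_atTop_nhds_zero_nat).const_mul (1:ℝ)
          have h2 := tendsto_const_nhds (x := (1:ℝ)) (f := atTop (α := ℕ))
          simpa using h2.sub tendsto_one_div_add_atTop_nhds_zero_nat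
        apply h1.congr
        intro k
        have : ((k:ℝ) + 1) ≠ 0 := by positivity
        field_simp
        ring
      · filter_upwards with k
        have hlt : (k:ℝ) / ((k:ℝ)+1) < 1 := by
          rw [div_lt_one (by positivity)]
          linarith
        simp only [Set.mem_compl_iff, Set.mem_singleton_iff]
        exact hlt.ne
    have := hslope'.comp hcomp
    apply this.congr
    intro k
    have hk1 : (0:ℝ) < (k:ℝ) + 1 := by positivity
    have hk1ne : ((k:ℝ) + 1) ≠ 0 := hk1.ne'
    simp only [Function.comp_apply, slope_def_field, Real.one_rpow]
    have hrpow : ((k:ℝ) / ((k:ℝ)+1)) ^ p = (k:ℝ) ^ p / ((k:ℝ)+1) ^ p :=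
      Real.div_rpow (Nat.cast_nonneg k) hk1.le p
    have hsub : ((k:ℝ)+1) ^ (p - 1) = ((k:ℝ)+1) ^ p / ((k:ℝ)+1) := by
      rw [Real.rpow_sub hk1, Real.rpow_one]
    have hppos : (0:ℝ) < ((k:ℝ)+1) ^ p := Real.rpow_pos_of_pos hk1 p
    rw [hrpow, hsub]
    show ((k:ℝ) ^ p / ((k:ℝ)+1) ^ p - 1) / ((k:ℝ) / ((k:ℝ)+1) - 1)
        = (((k:ℝ)+1) ^ p - (k:ℝ) ^ p) / ((((k:ℝ)+1) ^ p) / ((k:ℝ)+1))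
    generalize (k:ℝ) ^ p = X at *
    generalize hY : ((k:ℝ)+1) ^ p = Y at *
    have hden : (k:ℝ) / ((k:ℝ)+1) - 1 = -1 / ((k:ℝ)+1) := by field_simp; ring
    rw [hden, div_div_eq_mul_div, div_sub' hppos.ne', div_div_eq_mul_div,
      div_eq_div_iff (by simp) (by positivity)]
    field_simp [hppos.ne']
    ring
  have hA := auxP b₁ hb0 hb' b hbn P hP
  have hu : Tendsto (fun k : ℕ => b₁ ^ 2 * (P (k+1) / (((k+1:ℕ)):ℝ) ^ b₁) ^ 2) atTop
      (nhds (b₁ ^ 2 * Γ ^ 2)) := by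
    have h1 : Tendsto (fun k : ℕ => P (k+1) / (((k+1:ℕ)):ℝ) ^ b₁) atTop (nhds Γ) :=
      hA.comp (tendsto_add_atTop_nat 1)
    exact (h1.pow 2).const_mul _
  have hv : Tendsto (fun k : ℕ => ((k:ℝ) + 1) ^ (p - 1) / g k) atTop (nhds p⁻¹) := by
    have := (hslope.inv₀ hpne)
    apply this.congr
    intro k
    rw [inv_div]
  have hratio : Tendsto (fun k : ℕ => (b (k+1)) ^ 2 * (P (k+1)) ^ 2 / g k) atTop
      (nhds (b₁ ^ 2 * Γ ^ 2 * p⁻¹)) := by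
    apply (hu.mul hv).congr
    intro k
    set K : ℝ := (k:ℝ) + 1 with hK
    have hKpos : (0:ℝ) < K := by positivity
    have hKcast : (((k+1:ℕ)):ℝ) = K := by push_cast; ring
    have hbk : b (k+1) = b₁ / K := by rw [hbn (k+1) (by omega), hKcast]
    have h2 : (K ^ b₁) ^ 2 = K ^ (2 * b₁) := by
      rw [sq, ← Real.rpow_add hKpos]; ring_nf
    have h4 : K ^ ((2:ℝ)) = K ^ 2 := by
      rw [show (2:ℝ) = ((2:ℕ):ℝ) by norm_num, Real.rpow_natCast]
    have h3 : K ^ (p - 1) = K ^ (2 * b₁) / K ^ 2 := by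
      rw [show p - 1 = 2 * b₁ - 2 from by rw [hp]; ring, Real.rpow_sub hKpos, h4]
    rw [hKcast, hbk, h3, div_pow, div_pow, h2]
    have hKb : (0:ℝ) < K ^ (2 * b₁) := Real.rpow_pos_of_pos hKpos _
    have hgk : g k ≠ 0 := (hgpos k).ne'
    field_simp
  have hCp : b₁ ^ 2 * Γ ^ 2 * p⁻¹ = C := by rw [hC, div_eq_mul_inv]
  rw [hCp] at hratio
  set f : ℕ → ℝ := fun k => (b (k+1)) ^ 2 * (P (k+1)) ^ 2 - C * g k with hf
  have hlo : f =o[atTop] g := by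
    rw [Asymptotics.isLittleO_iff_tendsto (fun x hx => absurd hx (hgpos x).ne')]
    have h5 : Tendsto (fun k : ℕ => (b (k+1)) ^ 2 * (P (k+1)) ^ 2 / g k - C) atTop
        (nhds 0) := by
      have := hratio.sub_const C
      simpa using this
    apply h5.congr
    intro k
    rw [hf]
    have hgk : g k ≠ 0 := (hgpos k).ne'
    field_simp
  have hsum := hlo.sum_range (fun i => (hgpos i).le) hgtop
  have hsum' : (fun n : ℕ => (∑ k ∈ Finset.range n, (b (k+1)) ^ 2 * (P (k+1)) ^ 2)
      - C * (n:ℝ) ^ p) =o[atTop] (fun n : ℕ => (n:ℝ) ^ p) := by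
    have he1 : ∀ n : ℕ, ∑ k ∈ Finset.range n, f k
        = (∑ k ∈ Finset.range n, (b (k+1)) ^ 2 * (P (k+1)) ^ 2) - C * (n:ℝ) ^ p := by
      intro n
      rw [hf]
      rw [Finset.sum_sub_distrib, ← Finset.mul_sum, hgsum]
    have he2 : ∀ n : ℕ, ∑ k ∈ Finset.range n, g k = (n:ℝ) ^ p := hgsum
    calc (fun n : ℕ => (∑ k ∈ Finset.range n, (b (k+1)) ^ 2 * (P (k+1)) ^ 2) - C * (n:ℝ) ^ p)
        = fun n => ∑ k ∈ Finset.range n, f k := by funext n; rw [he1]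
      _ =o[atTop] (fun n => ∑ k ∈ Finset.range n, g k) := hsum
      _ = fun n : ℕ => (n:ℝ) ^ p := by funext n; rw [he2]
  have h0 := hsum'.tendsto_div_nhds_zero
  have hfinal := h0.add (tendsto_const_nhds (x := C) (f := atTop (α := ℕ)))
  rw [zero_add] at hfinal
  have hCval : C = b₁ ^ 2 / (2 * b₁ - 1) * Real.Gamma (1 - b₁) ^ 2 := by
    rw [hC, hΓ, hp]; ring
  rw [hCval] at hfinal
  apply hfinal.congr'
  filter_upwards [eventually_ge_atTop 1] with n hn
  have hn0 : (0:ℝ) < n := by exact_mod_cast hn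
  have hnp : (0:ℝ) < (n:ℝ) ^ p := Real.rpow_pos_of_pos hn0 _
  have hS : ∑ k ∈ Finset.range n, (b (k+1)) ^ 2 * (P (k+1)) ^ 2
      = ∑ k ∈ Finset.Icc 1 n, (b k) ^ 2 * (P k) ^ 2 := by
    rw [← Finset.Ico_add_one_right_eq_Icc, Finset.sum_Ico_eq_sum_range]
    apply Finset.sum_congr (by norm_num)
    intro k _
    rw [add_comm]
  rw [hS]
  rw [hp]
  field_simp
  ring
end

section
/- Let 1/2 < b < 1 and b₁ ∈ (0,1), b_n = b₁/n^b, P_n = ∏_{k=1}^n (1-b_k)^{-1}. Then lim_{n→∞} (1/(b_n P_n²)) Σ_{k=1}^n b_k² P_k² = 1/2. -/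
open Filter Asymptotics Finset Real

theorem my_stolz {u v : ℕ → ℝ} {L : ℝ}
    (hv : ∀ᶠ n in atTop, 0 < v n)
    (hdiv : Tendsto (fun n => ∑ k ∈ Finset.range n, v k) atTop atTop)
    (huv : Tendsto (fun n => u n / v n) atTop (nhds L)) :
    Tendsto (fun n => (∑ k ∈ Finset.range n, u k) / (∑ k ∈ Finset.range n, v k))
      atTop (nhds L) := by
  obtain ⟨N, hN⟩ := eventually_atTop.1 hv
  set g : ℕ → ℝ := fun k => if k < N then 0 else v k with hg
  set f : ℕ → ℝ := fun k => if k < N then 0 else u k - L * v k with hf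
  set S : ℕ → ℝ := fun n => ∑ k ∈ Finset.range n, v k with hS
  set G : ℕ → ℝ := fun n => ∑ k ∈ Finset.range n, g k with hG
  set F : ℕ → ℝ := fun n => ∑ k ∈ Finset.range n, f k with hF
  set C : ℝ := ∑ k ∈ Finset.range N, v k with hC
  set D : ℝ := ∑ k ∈ Finset.range N, (u k - L * v k) with hD
  have hGS : ∀ n, N ≤ n → G n = S n - C := by
    intro n hn
    have : S n = ∑ k ∈ Finset.range n, (g k + if k < N then v k else 0) := by
      apply Finset.sum_congr rfl
      intro k _
      by_cases h : k < N <;> simp [hg, h]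
    rw [hG, this, Finset.sum_add_distrib]
    have : ∑ k ∈ Finset.range n, (if k < N then v k else 0) = C := by
      rw [hC, ← Finset.sum_filter]
      congr 1
      ext k
      simp only [Finset.mem_filter, Finset.mem_range]
      omega
    rw [this]; ring
  have hFS : ∀ n, N ≤ n → F n = (∑ k ∈ Finset.range n, u k) - L * S n - D := by
    intro n hn
    have : (fun k => u k - L * v k) = fun k => f k + if k < N then u k - L * v k else 0 := by
      funext k
      by_cases h : k < N <;> simp [hf, h]
    have h2 : ∑ k ∈ Finset.range n, (u k - L * v k)
        = F n + ∑ k ∈ Finset.range n, (if k < N then u k - L * v k else 0) := by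
      rw [hF]
      rw [show (∑ k ∈ Finset.range n, (u k - L * v k)) = ∑ k ∈ Finset.range n, (f k + if k < N then u k - L * v k else 0) by exact Finset.sum_congr rfl fun k _ => by by_cases h : k < N <;> simp [hf, h]]
      rw [Finset.sum_add_distrib]
    have h3 : ∑ k ∈ Finset.range n, (if k < N then u k - L * v k else 0) = D := by
      rw [hD, ← Finset.sum_filter]
      congr 1
      ext k
      simp only [Finset.mem_filter, Finset.mem_range]
      omega
    have h4 : ∑ k ∈ Finset.range n, (u k - L * v k)
        = (∑ k ∈ Finset.range n, u k) - L * S n := by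
      rw [Finset.sum_sub_distrib, ← Finset.mul_sum, hS]
    rw [h3, h4] at h2
    linarith
  have hg0 : 0 ≤ g := by
    intro k
    by_cases h : k < N
    · simp [hg, h]
    · simp only [hg, h, if_false]
      exact (hN k (by omega)).le
  have hGdiv : Tendsto G atTop atTop := by
    apply Tendsto.congr' (f₁ := fun n => S n - C)
    · filter_upwards [eventually_ge_atTop N] with n hn
      exact (hGS n hn).symm
    · exact tendsto_atTop_add_const_right atTop (-C) hdiv
  have hfg : f =o[atTop] g := by
    rw [isLittleO_iff_tendsto']
    · apply Tendsto.congr' (f₁ := fun n => u n / v n - L)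
      · filter_upwards [eventually_ge_atTop N] with n hn
        have hvn : v n ≠ 0 := (hN n hn).ne'
        simp only [hf, hg, Nat.not_lt.2 hn, if_neg (by omega : ¬ n < N)]
        field_simp
      · simpa using huv.sub_const L
    · filter_upwards [eventually_ge_atTop N] with n hn h
      exact absurd h (by simp only [hg, if_neg (by omega : ¬ n < N)] at h ⊢; exact absurd h (hN n hn).ne')
  have hFG : Tendsto (fun n => F n / G n) atTop (nhds 0) :=
    (hfg.sum_range hg0 hGdiv).tendsto_div_nhds_zero
  have hSinv : Tendsto (fun n => (S n)⁻¹) atTop (nhds 0) := hdiv.inv_tendsto_atTop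
  have hGoverS : Tendsto (fun n => G n / S n) atTop (nhds 1) := by
    apply Tendsto.congr' (f₁ := fun n => 1 - C * (S n)⁻¹)
    · filter_upwards [eventually_ge_atTop N, hdiv.eventually_gt_atTop 0] with n hn hSn
      rw [hGS n hn, sub_div, div_self hSn.ne', div_eq_mul_inv]
    · have := (hSinv.const_mul C)
      simpa using tendsto_const_nhds.sub this
  have hDoverS : Tendsto (fun n => D * (S n)⁻¹) atTop (nhds 0) := by
    simpa using hSinv.const_mul D
  have key : Tendsto (fun n => L + (F n / G n) * (G n / S n) + D * (S n)⁻¹)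
      atTop (nhds (L + 0 * 1 + 0)) :=
    (tendsto_const_nhds.add (hFG.mul hGoverS)).add hDoverS
  rw [show L + 0 * 1 + 0 = L by ring] at key
  apply Tendsto.congr' _ key
  filter_upwards [eventually_ge_atTop N, hdiv.eventually_gt_atTop 0,
    hGdiv.eventually_gt_atTop 0] with n hn hSn hGn
  rw [hFS n hn]
  simp only [hS] at hSn ⊢
  field_simp
  ring

lemma stmt_19_alg (s r p : ℝ) (hs : s ≠ 0) :
    s * p^2 - r * (p*(1-s))^2 = s^2*p^2 * ((s - r)/s^2 + (r/s)*(2 - s)) := by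
  field_simp
  ring

theorem stmt_19 (b₁ b : ℝ) (hb₁ : 0 < b₁) (hb₁' : b₁ < 1)
    (hb : 1 / 2 < b) (hb' : b < 1)
    (bn : ℕ → ℝ) (hbn : ∀ n : ℕ, 1 ≤ n → bn n = b₁ / (n : ℝ) ^ b)
    (P : ℕ → ℝ) (hP : ∀ n, P n = ∏ k ∈ Finset.Icc 1 n, (1 - bn k)⁻¹) :
    Tendsto (fun n : ℕ =>
      (1 / (bn n * (P n) ^ 2)) * ∑ k ∈ Finset.Icc 1 n, (bn k) ^ 2 * (P k) ^ 2)
      atTop (nhds (1 / 2)) := by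
  have hbpos : 0 < b := by linarith
  have hb1b : (0:ℝ) < 1 - b := by linarith
  -- basic positivity facts
  have hbnpos : ∀ k : ℕ, 1 ≤ k → 0 < bn k := by
    intro k hk
    rw [hbn k hk]
    have : (0:ℝ) < (k:ℝ) := by exact_mod_cast hk
    positivity
  have hbnlt : ∀ k : ℕ, 1 ≤ k → bn k < 1 := by
    intro k hk
    rw [hbn k hk]
    have h1 : (1:ℝ) ≤ (k:ℝ) := by exact_mod_cast hk
    have h2 : (1:ℝ) ≤ (k:ℝ) ^ b := Real.one_le_rpow h1 hbpos.le
    rw [div_lt_one (by linarith)]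
    linarith
  have hPpos : ∀ n, 0 < P n := by
    intro n
    rw [hP n]
    apply Finset.prod_pos
    intro k hk
    have hk1 : 1 ≤ k := (Finset.mem_Icc.mp hk).1
    have h2 : (0:ℝ) < 1 - bn k := by linarith [hbnlt k hk1]
    positivity
  have hPrec : ∀ n : ℕ, P (n+1) = P n * (1 - bn (n+1))⁻¹ := by
    intro n
    rw [hP (n+1), hP n, Finset.prod_Icc_succ_top (by omega : 1 ≤ n + 1)]
  -- sequences for Stolz
  set u : ℕ → ℝ := fun k => bn (k+1)^2 * P (k+1)^2 with hu
  set v : ℕ → ℝ := fun k =>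
    if k = 0 then bn 1 * P 1^2 else bn (k+1) * P (k+1)^2 - bn k * P k^2 with hv
  have hupos : ∀ k, 0 < u k := by
    intro k
    have h1 := hbnpos (k+1) (by omega)
    have h2 := hPpos (k+1)
    simp only [hu]
    positivity
  have hSv : ∀ n : ℕ, 1 ≤ n → ∑ k ∈ Finset.range n, v k = bn n * P n ^ 2 := by
    intro n hn
    induction n with
    | zero => omega
    | succ m ih =>
      rcases Nat.eq_or_lt_of_le hn with h | h
      · simp only [hv, ← h]
        simp
      · have hm : 1 ≤ m := by omega
        rw [Finset.sum_range_succ, ih hm]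
        simp only [hv, if_neg (by omega : ¬ m = 0)]
        ring
  have hSu : ∀ n : ℕ, ∑ k ∈ Finset.range n, u k = ∑ k ∈ Finset.Icc 1 n, bn k ^ 2 * P k ^ 2 := by
    intro n
    rw [← Finset.Ico_add_one_right_eq_Icc, Finset.sum_Ico_eq_sum_range]
    simp only [Nat.add_sub_cancel, hu]
    apply Finset.sum_congr rfl
    intro k _
    rw [add_comm 1 k]
  -- divergence of bn n * P n ^ 2
  have hcinf : Tendsto (fun n : ℕ => bn n * P n ^ 2) atTop atTop := by
    set k0 : ℕ := Nat.ceil (b/(1-b)) + 1 with hk0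
    have hk0pos : 0 < k0 := Nat.succ_pos _
    have hk0gt : b/(1-b) < (k0:ℝ) := by
      have h := Nat.le_ceil (b/(1-b))
      have : ((Nat.ceil (b/(1-b)) : ℕ) : ℝ) < (k0:ℝ) := by
        rw [hk0]; push_cast; linarith
      linarith
    have he : 0 < (k0:ℝ)*(1-b) - b := by
      have := (div_lt_iff₀ hb1b).mp hk0gt
      linarith
    set Cst : ℝ := b₁ * (2*b₁/(k0:ℝ))^k0 with hCst
    have hk0r : (0:ℝ) < (k0:ℝ) := by exact_mod_cast hk0pos
    have hCstpos : 0 < Cst := by rw [hCst]; positivity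
    have hlow : ∀ n : ℕ, 1 ≤ n → Cst * (n:ℝ)^((k0:ℝ)*(1-b)-b) ≤ bn n * P n ^ 2 := by
      intro n hn
      have hn0 : (0:ℝ) < n := by exact_mod_cast hn
      have hsum : b₁ * (n:ℝ)^(1-b) ≤ ∑ k ∈ Finset.Icc 1 n, bn k := by
        have h1 : ∀ k ∈ Finset.Icc 1 n, b₁ / (n:ℝ)^b ≤ bn k := by
          intro k hk
          obtain ⟨hk1, hk2⟩ := Finset.mem_Icc.mp hk
          have hk0' : (0:ℝ) < (k:ℝ) := by exact_mod_cast hk1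
          rw [hbn k hk1]
          gcongr
        calc b₁ * (n:ℝ)^(1-b) = (n : ℝ) * (b₁/(n:ℝ)^b) := by
              rw [Real.rpow_sub hn0, Real.rpow_one]; field_simp
          _ = ∑ _k ∈ Finset.Icc 1 n, (b₁/(n:ℝ)^b) := by
              rw [Finset.sum_const, Nat.card_Icc, Nat.add_sub_cancel, nsmul_eq_mul]
          _ ≤ ∑ k ∈ Finset.Icc 1 n, bn k := Finset.sum_le_sum h1
      have hexpP : Real.exp (∑ k ∈ Finset.Icc 1 n, bn k) ≤ P n := by
        rw [hP n, Real.exp_sum]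
        apply Finset.prod_le_prod
        · intro k _; positivity
        · intro k hk
          have hk1 := (Finset.mem_Icc.mp hk).1
          have h1 := hbnpos k hk1
          have h2 := hbnlt k hk1
          have h3 : 1 - bn k ≤ Real.exp (-(bn k)) := by
            have := Real.add_one_le_exp (-(bn k)); linarith
          rw [show Real.exp (bn k) = (Real.exp (-(bn k)))⁻¹ by
            rw [Real.exp_neg, inv_inv]]
          exact inv_anti₀ (by linarith) h3
      have hPexp2 : Real.exp (2 * (b₁ * (n:ℝ)^(1-b))) ≤ P n ^ 2 := by
        have h1 : Real.exp (b₁*(n:ℝ)^(1-b)) ≤ P n := (Real.exp_le_exp.mpr hsum).trans hexpP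
        calc Real.exp (2*(b₁*(n:ℝ)^(1-b))) = Real.exp (b₁*(n:ℝ)^(1-b))^2 := by
              rw [← Real.exp_nat_mul]; norm_num
          _ ≤ P n ^2 := pow_le_pow_left₀ (Real.exp_pos _).le h1 2
      have hexplow : ((2*(b₁*(n:ℝ)^(1-b)))/(k0:ℝ))^k0 ≤ Real.exp (2*(b₁*(n:ℝ)^(1-b))) := by
        set t := 2*(b₁*(n:ℝ)^(1-b)) with htdef
        have ht : 0 ≤ t := by rw [htdef]; positivity
        have h1 : t/(k0:ℝ) ≤ Real.exp (t/(k0:ℝ)) := by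
          linarith [Real.add_one_le_exp (t/(k0:ℝ))]
        calc (t/(k0:ℝ))^k0 ≤ Real.exp (t/(k0:ℝ))^k0 := pow_le_pow_left₀ (by positivity) h1 k0
          _ = Real.exp ((k0:ℝ)*(t/(k0:ℝ))) := (Real.exp_nat_mul _ k0).symm
          _ = Real.exp t := by congr 1; field_simp
      rw [hbn n hn]
      calc Cst * (n:ℝ)^((k0:ℝ)*(1-b)-b)
          = b₁/(n:ℝ)^b * ((2*(b₁*(n:ℝ)^(1-b)))/(k0:ℝ))^k0 := by
            rw [hCst, Real.rpow_sub hn0,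
              show ((k0:ℝ)*(1-b)) = (1-b)*(k0:ℝ) by ring,
              Real.rpow_mul hn0.le, Real.rpow_natCast]
            rw [div_pow, div_pow, mul_pow, mul_pow]
            field_simp
            ring
        _ ≤ b₁/(n:ℝ)^b * Real.exp (2*(b₁*(n:ℝ)^(1-b))) := by
            have : (0:ℝ) ≤ b₁/(n:ℝ)^b := by positivity
            exact mul_le_mul_of_nonneg_left hexplow this
        _ ≤ b₁/(n:ℝ)^b * P n^2 := by
            have : (0:ℝ) ≤ b₁/(n:ℝ)^b := by positivity
            exact mul_le_mul_of_nonneg_left hPexp2 this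
    have hmono : Tendsto (fun x : ℝ => Cst * x ^ ((k0:ℝ)*(1-b)-b)) atTop atTop :=
      (tendsto_rpow_atTop he).const_mul_atTop hCstpos
    apply tendsto_atTop_mono' atTop _ (hmono.comp tendsto_natCast_atTop_atTop)
    filter_upwards [eventually_ge_atTop 1] with n hn
    exact hlow n hn
  -- the ratio T
  set T : ℕ → ℝ := fun n =>
    (bn (n+1) - bn n) / bn (n+1)^2 + (bn n / bn (n+1)) * (2 - bn (n+1)) with hTdef
  have hT2 : Tendsto T atTop (nhds 2) := by
    have hs1 : Tendsto (fun n : ℕ => ((n:ℝ)+1)/n) atTop (nhds 1) := by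
      have h0 := tendsto_one_div_atTop_nhds_zero_nat (𝕜 := ℝ)
      have h1 := (tendsto_const_nhds (x := (1:ℝ)) (f := (atTop : Filter ℕ))).add h0
      apply Tendsto.congr' _ (by simpa using h1)
      filter_upwards [eventually_ge_atTop 1] with n hn
      have hn0 : ((n:ℝ)) ≠ 0 := by
        have : (0:ℝ) < n := by exact_mod_cast hn
        linarith
      field_simp
    have hsb : Tendsto (fun n : ℕ => (((n:ℝ)+1)/n)^b) atTop (nhds 1) := by
      have hc : ContinuousAt (fun x : ℝ => x ^ b) 1 :=
        Real.continuousAt_rpow_const 1 b (Or.inl one_ne_zero)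
      have := hc.tendsto.comp hs1
      simpa [Real.one_rpow, Function.comp_def] using this
    have hn1pow : Tendsto (fun n : ℕ => ((n:ℝ)+1)^b) atTop atTop :=
      (tendsto_rpow_atTop hbpos).comp
        (tendsto_atTop_add_const_right atTop 1 tendsto_natCast_atTop_atTop)
    have hbn0 : Tendsto (fun n : ℕ => bn (n+1)) atTop (nhds 0) := by
      apply Tendsto.congr' _ (Tendsto.div_atTop (tendsto_const_nhds (x := b₁)) hn1pow)
      filter_upwards [eventually_ge_atTop 1] with n hn
      rw [hbn (n+1) (by omega)]
      push_cast
      ring_nf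
    have hB : Tendsto (fun n : ℕ => (bn n / bn (n+1)) * (2 - bn (n+1))) atTop (nhds 2) := by
      have hratio : Tendsto (fun n : ℕ => bn n / bn (n+1)) atTop (nhds 1) := by
        apply Tendsto.congr' _ hsb
        filter_upwards [eventually_ge_atTop 1] with n hn
        have hn0 : (0:ℝ) < n := by exact_mod_cast hn
        rw [hbn n hn, hbn (n+1) (by omega)]
        push_cast
        rw [Real.div_rpow (by positivity) (by positivity)]
        have h1 : ((n:ℝ))^b ≠ 0 := by positivity
        have h2 : ((n:ℝ)+1)^b ≠ 0 := by positivity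
        field_simp
      have h := hratio.mul ((tendsto_const_nhds (x := (2:ℝ))).sub hbn0)
      norm_num at h
      exact h
    have hA : Tendsto (fun n : ℕ => (bn (n+1) - bn n) / bn (n+1)^2) atTop (nhds 0) := by
      have hl : Tendsto (fun n : ℕ => -(b/b₁) * (((n:ℝ)+1)^b / n)) atTop (nhds 0) := by
        have ht : Tendsto (fun n : ℕ => ((n:ℝ)+1)^b / n) atTop (nhds 0) := by
          have h1 : Tendsto (fun n : ℕ => ((n:ℝ)+1)^(b-1)) atTop (nhds 0) := by
            have h2 := (tendsto_rpow_neg_atTop (by linarith : (0:ℝ) < 1 - b)).comp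
              (tendsto_atTop_add_const_right atTop 1
                (tendsto_natCast_atTop_atTop : Tendsto (fun n : ℕ => (n:ℝ)) atTop atTop))
            rw [show b-1 = -(1-b) by ring]
            exact h2
          have h3 := h1.mul hs1
          apply Tendsto.congr' _ (by simpa using h3)
          filter_upwards [eventually_ge_atTop 1] with n hn
          have hn0 : (0:ℝ) < n := by exact_mod_cast hn
          rw [Real.rpow_sub (by positivity), Real.rpow_one]
          field_simp
        have := ht.const_mul (-(b/b₁))
        simpa using this
      apply tendsto_of_tendsto_of_tendsto_of_le_of_le' hl
        (tendsto_const_nhds (x := (0:ℝ)))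
      · -- lower bound
        filter_upwards [eventually_ge_atTop 1] with n hn
        have hn0 : (0:ℝ) < n := by exact_mod_cast hn
        set x : ℝ := ((n:ℝ)+1)^b with hxdef
        set y : ℝ := ((n:ℝ))^b with hydef
        have hx : 0 < x := by rw [hxdef]; positivity
        have hy : 0 < y := by rw [hydef]; positivity
        have hbn1 : bn (n+1) = b₁ / x := by
          rw [hbn (n+1) (by omega), hxdef]; push_cast; ring_nf
        have hbnn : bn n = b₁ / y := hbn n hn
        have hBern : x ≤ y * (1 + b * (1/n)) := by
          have h1 : ((n:ℝ)+1) = n * (1 + 1/n) := by field_simp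
          have h2 : x = y * (1 + 1/(n:ℝ))^b := by
            rw [hxdef, hydef, h1, Real.mul_rpow hn0.le (by positivity)]
          have h3 : (1 + 1/(n:ℝ))^b ≤ 1 + b * (1/n) := by
            have hge : (0:ℝ) ≤ 1/(n:ℝ) := by positivity
            exact rpow_one_add_le_one_add_mul_self (by linarith) hbpos.le hb'.le
          rw [h2]
          exact mul_le_mul_of_nonneg_left h3 hy.le
        have hcalc : y*(1+b*(1/(n:ℝ)))*(n:ℝ) = y*(n:ℝ) + b*y := by
          field_simp
        have key2 : x*(n:ℝ) ≤ y*(n:ℝ) + b*y := by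
          have h := mul_le_mul_of_nonneg_right hBern hn0.le
          rw [hcalc] at h
          exact h
        have h2 : (x-y)/y ≤ b/(n:ℝ) := by
          rw [div_le_div_iff₀ hy hn0]
          nlinarith [key2]
        have h1 : -(b/(n:ℝ)) ≤ (y - x)/y := by
          have hrw : (y-x)/y = -((x-y)/y) := by ring
          rw [hrw]
          linarith
        have hAeq : (bn (n+1) - bn n)/bn (n+1)^2 = (x/b₁)*((y-x)/y) := by
          rw [hbn1, hbnn]
          field_simp
        calc -(b/b₁)*(x/(n:ℝ)) = (x/b₁)*(-(b/(n:ℝ))) := by ring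
          _ ≤ (x/b₁)*((y-x)/y) := mul_le_mul_of_nonneg_left h1 (by positivity)
          _ = (bn (n+1) - bn n)/bn (n+1)^2 := hAeq.symm
      · -- upper bound
        filter_upwards [eventually_ge_atTop 1] with n hn
        have hn0 : (0:ℝ) < n := by exact_mod_cast hn
        have hle : bn (n+1) ≤ bn n := by
          rw [hbn (n+1) (by omega), hbn n hn]
          push_cast
          gcongr
          · linarith
        have hsq : (0:ℝ) ≤ bn (n+1)^2 := sq_nonneg _
        exact div_nonpos_of_nonpos_of_nonneg (by linarith) hsq
    have hsum := hA.add hB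
    norm_num at hsum
    apply hsum.congr
    intro n
    rfl
  have hvuT : ∀ n : ℕ, 1 ≤ n → v n = u n * T n := by
    intro n hn
    have hPn : P n = P (n+1) * (1 - bn (n+1)) := by
      rw [hPrec n]
      have : (1 : ℝ) - bn (n+1) ≠ 0 := by
        have := hbnlt (n+1) (by omega); linarith
      field_simp
    have hbnn : bn (n+1) ≠ 0 := (hbnpos (n+1) (by omega)).ne'
    simp only [hv, hu, hTdef, if_neg (by omega : ¬ n = 0)]
    rw [hPn]
    exact stmt_19_alg (bn (n+1)) (bn n) (P (n+1)) hbnn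
  -- apply Stolz
  have hvev : ∀ᶠ n in atTop, 0 < v n := by
    filter_upwards [hT2.eventually (eventually_gt_nhds (by norm_num : (0:ℝ) < 2)),
      eventually_ge_atTop 1] with n hTn hn
    rw [hvuT n hn]
    exact mul_pos (hupos n) hTn
  have hdiv : Tendsto (fun n => ∑ k ∈ Finset.range n, v k) atTop atTop := by
    apply Tendsto.congr' _ hcinf
    filter_upwards [eventually_ge_atTop 1] with n hn
    exact (hSv n hn).symm
  have huv : Tendsto (fun n => u n / v n) atTop (nhds (1/2)) := by
    have h2 : Tendsto (fun n => (T n)⁻¹) atTop (nhds (2⁻¹)) := hT2.inv₀ (by norm_num)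
    rw [show (1:ℝ)/2 = 2⁻¹ by norm_num]
    apply Tendsto.congr' _ h2
    filter_upwards [eventually_ge_atTop 1] with n hn
    rw [hvuT n hn, div_mul_cancel_left₀ (hupos n).ne']
  have main := my_stolz hvev hdiv huv
  apply Tendsto.congr' _ main
  filter_upwards [eventually_ge_atTop 1] with n hn
  rw [hSu n, hSv n hn, one_div, inv_mul_eq_div]
end
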